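/- arXiv:2601.04637 — 3 statements merged into one kernel-verified Lean document; each statement's English description precedes it below -/
import Mathlib

section
/- There exists an infinite family of planar multigraphs M on n vertices with a(M) = n/4; specifically, for each k ≥ 1, the disjoint union of k copies of K₄ with every edge duplicated is a planar multigraph on n = 4k vertices with maximum induced forest of size exactly k = n/4. -/
/-! Basic theory of finite multigraphs (parallel edges allowed, no loops),
induced forests, and combinatorial plane embeddings (rotation systems of
genus zero together with a nesting of components, à la Heffter–Edmonds). -/

structure Multigraph (V : Type) where
  mult : V → V → ℕ
  symm : ∀ u v, mult u v = mult v u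
  loopless : ∀ v, mult v v = 0

namespace Multigraph

variable {V : Type}

/-- The underlying simple graph: adjacency iff at least one edge. -/
def support (M : Multigraph V) : SimpleGraph V where
  Adj u v := 0 < M.mult u v
  symm := by
    constructor
    intro u v h
    rw [M.symm]; exact h
  loopless := by
    constructor
    intro v h
    rw [M.loopless] at h; exact lt_irrefl 0 h

/-- A vertex set induces a forest in a multigraph iff no two of its vertices are
joined by parallel edges (which would form a `2`-cycle) and the induced simple
graph is acyclic. -/
def IsInducedForest (M : Multigraph V) (S : Finset V) : Prop :=
  (∀ u ∈ S, ∀ v ∈ S, M.mult u v ≤ 1) ∧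
    ((M.support.induce (S : Set V)).IsAcyclic)

/-- `a(M)`: the maximum number of vertices inducing a forest. -/
noncomputable def forestNum (M : Multigraph V) : ℕ :=
  sSup {k | ∃ S : Finset V, M.IsInducedForest S ∧ S.card = k}

/-- The number of unordered pairs of vertices joined by parallel edges. -/
noncomputable def parallelPairs (M : Multigraph V) : ℕ :=
  Nat.card {p : Sym2 V // ∃ a b, p = s(a, b) ∧ 2 ≤ M.mult a b}

/-- The induced sub-multigraph on a set of vertices. -/
def induce (M : Multigraph V) (S : Set V) : Multigraph S where
  mult u v := M.mult u v
  symm := fun u v => M.symm u v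
  loopless := fun v => M.loopless v

/-- Darts: an edge with a direction; the edges from `u` to `v` are indexed by
`Fin (M.mult u v)`. -/
def Dart (M : Multigraph V) : Type :=
  Σ p : V × V, Fin (M.mult p.1 p.2)

instance dartFinite [Finite V] (M : Multigraph V) : Finite M.Dart := by
  have : Finite (Σ p : V × V, Fin (M.mult p.1 p.2)) := by infer_instance
  exact this

/-- Reversal of a dart. -/
def dartRev (M : Multigraph V) (d : M.Dart) : M.Dart :=
  ⟨(d.1.2, d.1.1), Fin.cast (M.symm d.1.1 d.1.2) d.2⟩

lemma dartRev_involutive (M : Multigraph V) : Function.Involutive M.dartRev := by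
  rintro ⟨⟨u, v⟩, i⟩
  simp [dartRev]
  rfl

/-- Reversal of darts as a permutation. -/
def revPerm (M : Multigraph V) : Equiv.Perm M.Dart :=
  Function.Involutive.toPerm _ (M.dartRev_involutive)

/-- The number of edges (each edge yields two darts). -/
noncomputable def edgeCount (M : Multigraph V) : ℕ := Nat.card M.Dart / 2

/-- The number of connected components. -/
noncomputable def components (M : Multigraph V) : ℕ :=
  Nat.card M.support.ConnectedComponent

/-- The number of connected components containing at least one edge. -/
noncomputable def edgeComponents (M : Multigraph V) : ℕ :=
  Nat.card {c : M.support.ConnectedComponent //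
    ∃ d : M.Dart, M.support.connectedComponentMk d.1.1 = c}

/-- The setoid of belonging to the same cycle of a permutation. -/
def cycleSetoid {β : Type*} (φ : Equiv.Perm β) : Setoid β :=
  ⟨φ.SameCycle, ⟨fun x => Equiv.Perm.SameCycle.refl φ x,
    fun h => h.symm, fun h1 h2 => h1.trans h2⟩⟩

/-- The face permutation of a rotation system: first reverse a dart, then rotate. -/
def facePerm (M : Multigraph V) (rot : Equiv.Perm M.Dart) : Equiv.Perm M.Dart :=
  (M.revPerm).trans rot

/-- Combinatorial faces (per connected component): orbits of the face permutation. -/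
def Faces (M : Multigraph V) (rot : Equiv.Perm M.Dart) : Type :=
  Quotient (cycleSetoid (M.facePerm rot))

instance facesFinite [Finite V] (M : Multigraph V) (rot : Equiv.Perm M.Dart) :
    Finite (M.Faces rot) := by
  have : Finite (Quotient (cycleSetoid (M.facePerm rot))) := Quotient.finite _
  exact this

/-- Connected components that contain at least one dart. -/
def DartComp (M : Multigraph V) : Type :=
  {c : M.support.ConnectedComponent // ∃ d : M.Dart, M.support.connectedComponentMk d.1.1 = c}

/-- The component in which a combinatorial face lives. -/
noncomputable def faceDartComp (M : Multigraph V) (rot : Equiv.Perm M.Dart) :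
    M.Faces rot → M.DartComp :=
  fun F => ⟨M.support.connectedComponentMk F.out.1.1, ⟨F.out, rfl⟩⟩

/-- A plane embedding of a multigraph: a rotation system whose combined Euler
characteristic is that of genus zero on every component, together with a choice
of the outer face of every component (with darts) and a well-founded nesting of
components in faces.  By the Heffter–Edmonds principle this data is exactly the
combinatorial description of an embedding into the plane. -/
structure PlaneEmbedding (M : Multigraph V) where
  rot : Equiv.Perm M.Dart
  rot_tail : ∀ d : M.Dart, (rot d).1.1 = d.1.1
  rot_cyclic : ∀ d e : M.Dart, d.1.1 = e.1.1 → rot.SameCycle d e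
  outOrbit : M.DartComp → M.Faces rot
  outOrbit_comp : ∀ c, M.faceDartComp rot (outOrbit c) = c
  encl : M.DartComp → Option (M.Faces rot)
  depth : M.DartComp → ℕ
  encl_depth : ∀ c F, encl c = some F → depth (M.faceDartComp rot F) < depth c
  euler : Nat.card V + Nat.card (M.Faces rot)
    = M.edgeCount + M.components + M.edgeComponents

/-- `M` is planar iff it has a plane embedding. -/
def IsPlanar (M : Multigraph V) : Prop := Nonempty M.PlaneEmbedding

namespace PlaneEmbedding

variable {M : Multigraph V}

/-- The merging relation identifying the outer combinatorial face of each
component with the face it is nested in (outermost components being merged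
into the unbounded face `Sum.inl ()`). -/
def mergeRel (E : M.PlaneEmbedding) :
    (Unit ⊕ M.Faces E.rot) → (Unit ⊕ M.Faces E.rot) → Prop :=
  fun x y => ∃ c, x = Sum.inr (E.outOrbit c) ∧
    y = Option.elim (E.encl c) (Sum.inl ()) Sum.inr

/-- The faces of the plane embedding: combinatorial faces merged along the
nesting (plus the unbounded face). -/
def PlaneFaces (E : M.PlaneEmbedding) : Type := Quot E.mergeRel

/-- The number of faces of the plane embedding. -/
noncomputable def numFaces (E : M.PlaneEmbedding) : ℕ := Nat.card E.PlaneFaces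

/-- The degree of a face: the number of edge-side (= dart) incidences with it. -/
noncomputable def faceDeg (E : M.PlaneEmbedding) (Pf : E.PlaneFaces) : ℕ :=
  Nat.card {d : M.Dart //
    Quot.mk E.mergeRel (Sum.inr (Quotient.mk (cycleSetoid (M.facePerm E.rot)) d)) = Pf}

/-- The embedding has no `2`-faces. -/
def NoTwoFaces (E : M.PlaneEmbedding) : Prop := ∀ Pf : E.PlaneFaces, E.faceDeg Pf ≠ 2

end PlaneEmbedding

end Multigraph

section
open Classical

/-- The multigraph associated with a simple graph (one edge per adjacency). -/
noncomputable def SimpleGraph.toMultigraph {V : Type} (G : SimpleGraph V) : Multigraph V where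
  mult u v := if G.Adj u v then 1 else 0
  symm := by
    intro u v
    by_cases h : G.Adj u v
    · simp [h, h.symm]
    · have h2 : ¬ G.Adj v u := fun h' => h h'.symm
      simp [h, h2]
  loopless := by intro v; simp

/-- The multigraph obtained from a simple graph by duplicating every edge. -/
noncomputable def SimpleGraph.doubleMultigraph {V : Type} (G : SimpleGraph V) : Multigraph V where
  mult u v := if G.Adj u v then 2 else 0
  symm := by
    intro u v
    by_cases h : G.Adj u v
    · simp [h, h.symm]
    · have h2 : ¬ G.Adj v u := fun h' => h h'.symm
      simp [h, h2]
  loopless := by intro v; simp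

/-- An independent set in a simple graph. -/
def SimpleGraph.IsIndepFinset {V : Type} (G : SimpleGraph V) (S : Finset V) : Prop :=
  ∀ u ∈ S, ∀ v ∈ S, ¬ G.Adj u v

/-- The independence number of a simple graph. -/
noncomputable def SimpleGraph.indepNumber {V : Type} (G : SimpleGraph V) : ℕ :=
  sSup {k | ∃ S : Finset V, G.IsIndepFinset S ∧ S.card = k}

/-- The disjoint union of `k` copies of `K₄`. -/
def cliquesUnion (k : ℕ) : SimpleGraph (Fin k × Fin 4) where
  Adj u v := u.1 = v.1 ∧ u.2 ≠ v.2
  symm := by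
    constructor
    rintro u v ⟨h1, h2⟩
    exact ⟨h1.symm, h2.symm⟩
  loopless := by
    constructor
    rintro u ⟨h1, h2⟩
    exact h2 rfl

/-- Deleting one of the parallel edges between `u` and `v`. -/
noncomputable def Multigraph.deleteParallel {V : Type} (M : Multigraph V) (u v : V) :
    Multigraph V where
  mult x y := if (x = u ∧ y = v) ∨ (x = v ∧ y = u) then M.mult x y - 1 else M.mult x y
  symm := by
    intro x y
    by_cases h : (x = u ∧ y = v) ∨ (x = v ∧ y = u)
    · have h' : (y = u ∧ x = v) ∨ (y = v ∧ x = u) := by tauto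
      simp only [if_pos h, if_pos h', M.symm x y]
    · have h' : ¬((y = u ∧ x = v) ∨ (y = v ∧ x = u)) := by tauto
      simp only [if_neg h, if_neg h', M.symm x y]
  loopless := by
    intro x
    by_cases h : (x = u ∧ x = v) ∨ (x = v ∧ x = u) <;> simp [h, M.loopless x]

end



namespace DK4

def m4 (a b : Fin 4) : ℕ := if a = b then 0 else 2

def D : Type := Σ p : Fin 4 × Fin 4, Fin (m4 p.1 p.2)

instance : DecidableEq D := by unfold D; infer_instance
instance : Fintype D := by unfold D; infer_instance

def encode (d : D) : Fin 24 :=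
  ⟨(d.1.1.val * 6 + (if d.1.2.val < d.1.1.val then d.1.2.val else d.1.2.val - 1) * 2
      + d.2.val) % 24, Nat.mod_lt _ (by norm_num)⟩

def decode : Fin 24 → D := fun i => match i.val with
  | 0 => ⟨(0, 1), ⟨0, by decide⟩⟩
  | 1 => ⟨(0, 1), ⟨1, by decide⟩⟩
  | 2 => ⟨(0, 2), ⟨0, by decide⟩⟩
  | 3 => ⟨(0, 2), ⟨1, by decide⟩⟩
  | 4 => ⟨(0, 3), ⟨0, by decide⟩⟩
  | 5 => ⟨(0, 3), ⟨1, by decide⟩⟩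
  | 6 => ⟨(1, 0), ⟨0, by decide⟩⟩
  | 7 => ⟨(1, 0), ⟨1, by decide⟩⟩
  | 8 => ⟨(1, 2), ⟨0, by decide⟩⟩
  | 9 => ⟨(1, 2), ⟨1, by decide⟩⟩
  | 10 => ⟨(1, 3), ⟨0, by decide⟩⟩
  | 11 => ⟨(1, 3), ⟨1, by decide⟩⟩
  | 12 => ⟨(2, 0), ⟨0, by decide⟩⟩
  | 13 => ⟨(2, 0), ⟨1, by decide⟩⟩
  | 14 => ⟨(2, 1), ⟨0, by decide⟩⟩
  | 15 => ⟨(2, 1), ⟨1, by decide⟩⟩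
  | 16 => ⟨(2, 3), ⟨0, by decide⟩⟩
  | 17 => ⟨(2, 3), ⟨1, by decide⟩⟩
  | 18 => ⟨(3, 0), ⟨0, by decide⟩⟩
  | 19 => ⟨(3, 0), ⟨1, by decide⟩⟩
  | 20 => ⟨(3, 1), ⟨0, by decide⟩⟩
  | 21 => ⟨(3, 1), ⟨1, by decide⟩⟩
  | 22 => ⟨(3, 2), ⟨0, by decide⟩⟩
  | 23 => ⟨(3, 2), ⟨1, by decide⟩⟩
  | _ => ⟨(0, 1), ⟨0, by decide⟩⟩

def rottable : Fin 24 → Fin 24 := fun i => match i.val with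
  | 0 => 1
  | 1 => 4
  | 2 => 3
  | 3 => 0
  | 4 => 5
  | 5 => 2
  | 6 => 8
  | 7 => 6
  | 8 => 9
  | 9 => 10
  | 10 => 11
  | 11 => 7
  | 12 => 16
  | 13 => 12
  | 14 => 13
  | 15 => 14
  | 16 => 17
  | 17 => 15
  | 18 => 21
  | 19 => 18
  | 20 => 23
  | 21 => 20
  | 22 => 19
  | 23 => 22
  | _ => 1

def rinvtable : Fin 24 → Fin 24 := fun i => match i.val with
  | 0 => 3
  | 1 => 0
  | 2 => 5
  | 3 => 2
  | 4 => 1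
  | 5 => 4
  | 6 => 7
  | 7 => 11
  | 8 => 6
  | 9 => 8
  | 10 => 9
  | 11 => 10
  | 12 => 13
  | 13 => 14
  | 14 => 15
  | 15 => 17
  | 16 => 12
  | 17 => 16
  | 18 => 19
  | 19 => 22
  | 20 => 21
  | 21 => 18
  | 22 => 23
  | 23 => 20
  | _ => 3

def facetable : Fin 24 → Fin 10 := fun i => match i.val with
  | 0 => 0
  | 1 => 1
  | 2 => 2
  | 3 => 3
  | 4 => 4
  | 5 => 5
  | 6 => 1
  | 7 => 4
  | 8 => 0
  | 9 => 6
  | 10 => 7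
  | 11 => 8
  | 12 => 3
  | 13 => 0
  | 14 => 6
  | 15 => 7
  | 16 => 2
  | 17 => 9
  | 18 => 5
  | 19 => 2
  | 20 => 8
  | 21 => 4
  | 22 => 9
  | 23 => 7
  | _ => 0

def reptable : Fin 10 → Fin 24 := fun i => match i.val with
  | 0 => 0
  | 1 => 1
  | 2 => 2
  | 3 => 3
  | 4 => 4
  | 5 => 5
  | 6 => 9
  | 7 => 10
  | 8 => 11
  | 9 => 17
  | _ => 0

def vcantable : Fin 4 → Fin 24 := fun i => match i.val with
  | 0 => 0
  | 1 => 8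
  | 2 => 13
  | 3 => 23
  | _ => 0
def rotfun (d : D) : D := decode (rottable (encode d))
def rinvfun (d : D) : D := decode (rinvtable (encode d))

lemma m4_symm : ∀ a b : Fin 4, m4 a b = m4 b a := by decide

def revfun (d : D) : D := ⟨(d.1.2, d.1.1), Fin.cast (m4_symm _ _) d.2⟩

def r : Equiv.Perm D := ⟨rotfun, rinvfun, by decide, by decide⟩
def frev : Equiv.Perm D := ⟨revfun, revfun, by decide, by decide⟩
def fface : Equiv.Perm D := frev.trans r

def g (d : D) : Fin 10 := facetable (encode d)
def s (j : Fin 10) : D := decode (reptable j)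
def vcan (a : Fin 4) : D := decode (vcantable a)

lemma rot_tail4 : ∀ d : D, (rotfun d).1.1 = d.1.1 := by decide
lemma vcan_tail : ∀ a : Fin 4, (vcan a).1.1 = a := by decide
lemma vreach : ∀ d : D, ∃ n : Fin 6, rotfun^[n.val] d = vcan d.1.1 := by decide
lemma g_invariant : ∀ d : D, g (rotfun (revfun d)) = g d := by decide
lemma g_s : ∀ j : Fin 10, g (s j) = j := by decide
lemma freach : ∀ d : D, ∃ n : Fin 24, (fun x => rotfun (revfun x))^[n.val] d = s (g d) := by
  decide
lemma card_D : Fintype.card D = 24 := by decide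



open Multigraph Equiv

section generic
variable {α β γ : Type*}

lemma sameCycle_invariant (f : Equiv.Perm α) (h : α → β)
    (hh : ∀ x, h (f x) = h x) {x y : α} (hxy : f.SameCycle x y) : h x = h y := by
  have hinv : ∀ x, h (f⁻¹ x) = h x := by
    intro x
    conv_rhs => rw [← Equiv.apply_symm_apply f x]
    exact (hh (f⁻¹ x)).symm
  obtain ⟨n, rfl⟩ := hxy
  have key : ∀ (n : ℤ) (x : α), h ((f ^ n) x) = h x := by
    intro n
    induction n using Int.induction_on with
    | zero => intro x; simp
    | succ n ih =>
      intro x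
      rw [zpow_add_one, Equiv.Perm.mul_apply, ih (f x), hh]
    | pred n ih =>
      intro x
      rw [zpow_sub_one, Equiv.Perm.mul_apply, ih (f⁻¹ x), hinv]
  exact (key n x).symm

lemma sameCycle_iterate (f : Equiv.Perm α) (n : ℕ) (x : α) :
    f.SameCycle x (f^[n] x) := by
  induction n with
  | zero => exact Equiv.Perm.SameCycle.refl _ _
  | succ n ih =>
    rw [Function.iterate_succ_apply']
    exact Equiv.Perm.sameCycle_apply_right.2 ih

/-- Conjugation of permutations along an equivalence, as a monoid hom. -/
def conjHom (e : α ≃ β) : Equiv.Perm β →* Equiv.Perm α where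
  toFun σ := (e.trans σ).trans e.symm
  map_one' := by ext x; simp
  map_mul' σ τ := by ext x; simp [Equiv.Perm.mul_apply]

lemma conjHom_apply (e : α ≃ β) (σ : Equiv.Perm β) (x : α) :
    conjHom e σ x = e.symm (σ (e x)) := rfl

lemma conjHom_sameCycle (e : α ≃ β) (σ : Equiv.Perm β) (x y : α) :
    (conjHom e σ).SameCycle x y ↔ σ.SameCycle (e x) (e y) := by
  constructor
  · rintro ⟨n, hn⟩
    refine ⟨n, ?_⟩
    rw [← map_zpow] at hn
    rw [conjHom_apply] at hn
    rw [← hn]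
    simp
  · rintro ⟨n, hn⟩
    refine ⟨n, ?_⟩
    rw [← map_zpow, conjHom_apply, hn]
    simp

/-- Acting on the second component of a product, as a monoid hom. -/
def prodHom (γ α : Type*) : Equiv.Perm α →* Equiv.Perm (γ × α) where
  toFun σ := (Equiv.refl γ).prodCongr σ
  map_one' := by ext x <;> simp
  map_mul' σ τ := by ext x <;> simp [Equiv.Perm.mul_apply]

lemma prodHom_apply (σ : Equiv.Perm α) (p : γ × α) :
    prodHom γ α σ p = (p.1, σ p.2) := rfl

lemma prodHom_sameCycle (σ : Equiv.Perm α) (p q : γ × α) :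
    (prodHom γ α σ).SameCycle p q ↔ p.1 = q.1 ∧ σ.SameCycle p.2 q.2 := by
  constructor
  · rintro ⟨n, hn⟩
    rw [← map_zpow] at hn
    rw [prodHom_apply] at hn
    exact ⟨(congrArg Prod.fst hn : _), ⟨n, (congrArg Prod.snd hn : _)⟩⟩
  · rintro ⟨h1, n, hn⟩
    refine ⟨n, ?_⟩
    rw [← map_zpow, prodHom_apply, h1, hn]

/-- Quotient of a product by cycles of a second-component permutation. -/
def prodQuot (σ : Equiv.Perm α) :
    Quotient (Multigraph.cycleSetoid (prodHom γ α σ)) ≃ γ × Quotient (Multigraph.cycleSetoid σ) where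
  toFun := Quotient.lift (fun p => (p.1, Quotient.mk (Multigraph.cycleSetoid σ) p.2)) (by
    rintro ⟨i, d⟩ ⟨j, d'⟩ h
    obtain ⟨h1, h2⟩ := (prodHom_sameCycle σ _ _).1 h
    dsimp at h1 ⊢
    rw [h1, Quotient.sound h2])
  invFun p := Quotient.lift
    (fun d => Quotient.mk (Multigraph.cycleSetoid (prodHom γ α σ)) (p.1, d))
    (fun d d' h => Quotient.sound ((prodHom_sameCycle σ _ _).2 ⟨rfl, h⟩)) p.2
  left_inv := by rintro ⟨⟨i, d⟩⟩; rfl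
  right_inv := by rintro ⟨i, ⟨d⟩⟩; rfl

end generic

/-- The orbit space of the single-copy face permutation. -/
def Q : Type := Quotient (Multigraph.cycleSetoid fface)

lemma g_const {d d' : D} (h : fface.SameCycle d d') : g d = g d' :=
  sameCycle_invariant fface g (fun x => g_invariant x) h

def qEquiv : Q ≃ Fin 10 where
  toFun := Quotient.lift g (fun _ _ h => g_const h)
  invFun j := Quotient.mk _ (s j)
  left_inv := by
    refine Quotient.ind ?_
    intro d
    apply Quotient.sound
    obtain ⟨n, hn⟩ := freach d
    have h2 : (⇑fface)^[n.val] d = s (g d) := hn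
    have : fface.SameCycle d (s (g d)) := by
      rw [← h2]; exact sameCycle_iterate fface n.val d
    exact this.symm
  right_inv j := g_s j

lemma vsame (d d' : D) (h : d.1.1 = d'.1.1) : r.SameCycle d d' := by
  obtain ⟨n, hn⟩ := vreach d
  obtain ⟨m, hm⟩ := vreach d'
  have h1 : (⇑r)^[n.val] d = vcan d.1.1 := hn
  have h2 : (⇑r)^[m.val] d' = vcan d'.1.1 := hm
  have a1 : r.SameCycle d (vcan d.1.1) := by
    rw [← h1]; exact sameCycle_iterate r n.val d
  have a2 : r.SameCycle d' (vcan d'.1.1) := by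
    rw [← h2]; exact sameCycle_iterate r m.val d'
  rw [h] at a1
  exact a1.trans a2.symm

section main
variable (k : ℕ)

lemma mult_eq (u v : Fin k × Fin 4) :
    ((cliquesUnion k).doubleMultigraph).mult u v
      = if u.1 = v.1 then m4 u.2 v.2 else 0 := by
  by_cases h1 : u.1 = v.1 <;> by_cases h2 : u.2 = v.2 <;>
    simp [SimpleGraph.doubleMultigraph, cliquesUnion, m4, h1, h2]

lemma adj_iff (u v : Fin k × Fin 4) :
    ((cliquesUnion k).doubleMultigraph).support.Adj u v ↔ u.1 = v.1 ∧ u.2 ≠ v.2 := by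
  show 0 < ((cliquesUnion k).doubleMultigraph).mult u v ↔ _
  rw [mult_eq]
  by_cases h1 : u.1 = v.1 <;> by_cases h2 : u.2 = v.2 <;> simp [h1, h2, m4]

lemma dart_fst_eq (d : ((cliquesUnion k).doubleMultigraph).Dart) :
    d.1.1.1 = d.1.2.1 := by
  have h : 0 < ((cliquesUnion k).doubleMultigraph).mult d.1.1 d.1.2 :=
    lt_of_le_of_lt (Nat.zero_le _) d.2.isLt
  rw [mult_eq] at h
  by_contra hne
  rw [if_neg hne] at h
  exact absurd h (lt_irrefl 0)

lemma dart_mult_eq (d : ((cliquesUnion k).doubleMultigraph).Dart) :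
    ((cliquesUnion k).doubleMultigraph).mult d.1.1 d.1.2 = m4 d.1.1.2 d.1.2.2 := by
  rw [mult_eq, if_pos (dart_fst_eq k d)]

lemma mult_eq' (i : Fin k) (a b : Fin 4) :
    m4 a b = ((cliquesUnion k).doubleMultigraph).mult (i, a) (i, b) := by
  rw [mult_eq]; simp

noncomputable def dartEquiv : ((cliquesUnion k).doubleMultigraph).Dart ≃ Fin k × D where
  toFun d := (d.1.1.1, ⟨(d.1.1.2, d.1.2.2), Fin.cast (dart_mult_eq k d) d.2⟩)
  invFun p := ⟨((p.1, p.2.1.1), (p.1, p.2.1.2)),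
    Fin.cast (mult_eq' k p.1 p.2.1.1 p.2.1.2) p.2.2⟩
  left_inv d := by
    obtain ⟨⟨⟨i, a⟩, ⟨j, b⟩⟩, x⟩ := d
    obtain rfl : i = j := dart_fst_eq k ⟨((i, a), (j, b)), x⟩
    exact Sigma.ext rfl (heq_of_eq (Fin.ext (by simp)))
  right_inv p := by
    obtain ⟨i, ⟨⟨a, b⟩, y⟩⟩ := p
    refine Prod.ext rfl ?_
    exact Sigma.ext rfl (heq_of_eq (Fin.ext (by simp)))

lemma symm_tail (p : Fin k × D) :
    ((dartEquiv k).symm p).1.1 = (p.1, p.2.1.1) := rfl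

/-- The rotation system on the union of doubled `K₄`s. -/
noncomputable def rotk : Equiv.Perm ((cliquesUnion k).doubleMultigraph).Dart :=
  conjHom (dartEquiv k) (prodHom (Fin k) D r)

lemma rotk_tail (d : ((cliquesUnion k).doubleMultigraph).Dart) :
    (rotk k d).1.1 = d.1.1 := by
  have h1 : rotk k d = (dartEquiv k).symm
      (((dartEquiv k) d).1, r ((dartEquiv k) d).2) := rfl
  rw [h1, symm_tail]
  have h2 : (r ((dartEquiv k) d).2).1.1 = ((dartEquiv k) d).2.1.1 := rot_tail4 _
  rw [h2]
  rfl

lemma rotk_cyclic (d e : ((cliquesUnion k).doubleMultigraph).Dart)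
    (h : d.1.1 = e.1.1) : (rotk k).SameCycle d e := by
  rw [rotk, conjHom_sameCycle, prodHom_sameCycle]
  have h1 : d.1.1.1 = e.1.1.1 := congrArg Prod.fst h
  have h2 : d.1.1.2 = e.1.1.2 := congrArg Prod.snd h
  exact ⟨h1, vsame _ _ h2⟩

lemma revPerm_eq : ((cliquesUnion k).doubleMultigraph).revPerm
    = conjHom (dartEquiv k) (prodHom (Fin k) D frev) := by
  apply Equiv.ext
  intro d
  obtain ⟨⟨⟨i, a⟩, ⟨j, b⟩⟩, x⟩ := d
  obtain rfl : i = j := dart_fst_eq k ⟨((i, a), (j, b)), x⟩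
  show Multigraph.dartRev _ _ = _
  exact Sigma.ext rfl (heq_of_eq (Fin.ext rfl))

lemma facePerm_eq : Multigraph.facePerm _ (rotk k)
    = conjHom (dartEquiv k) (prodHom (Fin k) D fface) := by
  have hm : conjHom (dartEquiv k) (prodHom (Fin k) D fface)
      = conjHom (dartEquiv k) (prodHom (Fin k) D r)
        * conjHom (dartEquiv k) (prodHom (Fin k) D frev) := by
    rw [← map_mul, ← map_mul]
    rfl
  apply Equiv.ext
  intro d
  show rotk k (((cliquesUnion k).doubleMultigraph).revPerm d) = _
  rw [hm, revPerm_eq]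
  rfl

noncomputable def facesEquiv : Multigraph.Faces _ (rotk k) ≃ Fin k × Q :=
  (Quotient.congr (dartEquiv k) (fun a b => by
    show (Multigraph.facePerm _ (rotk k)).SameCycle a b ↔ _
    rw [facePerm_eq]
    exact conjHom_sameCycle _ _ _ _)).trans (prodQuot fface)

lemma card_faces : Nat.card (Multigraph.Faces _ (rotk k)) = k * 10 := by
  rw [Nat.card_congr ((facesEquiv k).trans ((Equiv.refl (Fin k)).prodCongr qEquiv))]
  simp [Nat.card_eq_fintype_card]

lemma card_dart : Nat.card ((cliquesUnion k).doubleMultigraph).Dart = k * 24 := by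
  rw [Nat.card_congr (dartEquiv k)]
  have : Fintype.card D = 24 := card_D
  simp [Nat.card_eq_fintype_card, this]

lemma reach_fst {u v : Fin k × Fin 4}
    (h : ((cliquesUnion k).doubleMultigraph).support.Reachable u v) : u.1 = v.1 := by
  obtain ⟨w⟩ := h
  induction w with
  | nil => rfl
  | cons ha _ ih => rw [← ih]; exact ((adj_iff k _ _).1 ha).1

lemma mk_zero (v : Fin k × Fin 4) :
    ((cliquesUnion k).doubleMultigraph).support.connectedComponentMk (v.1, 0)
      = ((cliquesUnion k).doubleMultigraph).support.connectedComponentMk v := by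
  by_cases h : v.2 = 0
  · have : (v.1, (0 : Fin 4)) = v := by rw [← h]
    rw [this]
  · exact SimpleGraph.ConnectedComponent.sound
      (((adj_iff k (v.1, 0) v).2 ⟨rfl, fun hh => h hh.symm⟩).reachable)

noncomputable def compEquiv : ((cliquesUnion k).doubleMultigraph).support.ConnectedComponent ≃ Fin k where
  toFun := SimpleGraph.ConnectedComponent.lift (fun v => v.1)
    (fun _ _ p _ => reach_fst k ⟨p⟩)
  invFun i := ((cliquesUnion k).doubleMultigraph).support.connectedComponentMk (i, 0)
  left_inv := by
    refine SimpleGraph.ConnectedComponent.ind ?_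
    intro v
    exact mk_zero k v
  right_inv i := rfl

def someD : D := ⟨(0, 1), ⟨0, by decide⟩⟩

lemma dartcomp_all (c : ((cliquesUnion k).doubleMultigraph).support.ConnectedComponent) :
    ∃ d : ((cliquesUnion k).doubleMultigraph).Dart,
      ((cliquesUnion k).doubleMultigraph).support.connectedComponentMk d.1.1 = c := by
  induction c using SimpleGraph.ConnectedComponent.ind with
  | _ v =>
    refine ⟨(dartEquiv k).symm (v.1, someD), ?_⟩
    rw [symm_tail]
    exact mk_zero k v

lemma card_comp : Nat.card ((cliquesUnion k).doubleMultigraph).support.ConnectedComponent = k := by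
  rw [Nat.card_congr (compEquiv k)]
  simp

lemma mk_tail_invariant (d : ((cliquesUnion k).doubleMultigraph).Dart) :
    ((cliquesUnion k).doubleMultigraph).support.connectedComponentMk
        ((Multigraph.facePerm _ (rotk k) d).1.1)
      = ((cliquesUnion k).doubleMultigraph).support.connectedComponentMk d.1.1 := by
  have h1 : (Multigraph.facePerm _ (rotk k) d).1.1
      = (((cliquesUnion k).doubleMultigraph).revPerm d).1.1 := rotk_tail k _
  have h2 : (((cliquesUnion k).doubleMultigraph).revPerm d).1.1 = d.1.2 := rfl
  rw [h1, h2]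
  have hadj : ((cliquesUnion k).doubleMultigraph).support.Adj d.1.1 d.1.2 :=
    lt_of_le_of_lt (Nat.zero_le _) d.2.isLt
  exact (SimpleGraph.ConnectedComponent.connectedComponentMk_eq_of_adj hadj).symm

noncomputable def embedding : ((cliquesUnion k).doubleMultigraph).PlaneEmbedding where
  rot := rotk k
  rot_tail := rotk_tail k
  rot_cyclic := rotk_cyclic k
  outOrbit c := Quotient.mk _ ((dartEquiv k).symm (compEquiv k c.1, someD))
  outOrbit_comp c := by
    apply Subtype.ext
    show ((cliquesUnion k).doubleMultigraph).support.connectedComponentMk _ = c.1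
    set x := (dartEquiv k).symm (compEquiv k c.1, someD) with hx
    have hout : (Multigraph.facePerm _ (rotk k)).SameCycle
        (Quotient.mk (Multigraph.cycleSetoid (Multigraph.facePerm _ (rotk k))) x).out x :=
      @Quotient.exact _ (Multigraph.cycleSetoid (Multigraph.facePerm _ (rotk k))) _ _
        (Quotient.out_eq _)
    have hinv := sameCycle_invariant (Multigraph.facePerm _ (rotk k))
      (fun d => ((cliquesUnion k).doubleMultigraph).support.connectedComponentMk d.1.1)
      (fun d => mk_tail_invariant k d) hout
    refine hinv.trans ?_
    show ((cliquesUnion k).doubleMultigraph).support.connectedComponentMk x.1.1 = c.1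
    have hx1 : x.1.1 = (compEquiv k c.1, (0 : Fin 4)) := symm_tail k _
    rw [hx1]
    exact (compEquiv k).left_inv c.1
  encl _ := none
  depth _ := 0
  encl_depth := by intro c F h; simp at h
  euler := by
    have h1 : Nat.card (Fin k × Fin 4) = k * 4 := by simp [Nat.card_eq_fintype_card]
    have h2 := card_faces k
    have h3 : ((cliquesUnion k).doubleMultigraph).edgeCount = k * 24 / 2 := by
      rw [Multigraph.edgeCount, card_dart]
    have h4 : ((cliquesUnion k).doubleMultigraph).components = k := card_comp k
    have h5 : ((cliquesUnion k).doubleMultigraph).edgeComponents = k := by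
      rw [Multigraph.edgeComponents,
        Nat.card_congr (Equiv.subtypeUnivEquiv (dartcomp_all k))]
      exact card_comp k
    rw [h1, h2, h3, h4, h5]
    omega

end main

end DK4


namespace DK4
section forest
variable (k : ℕ)

def witnessS : Finset (Fin k × Fin 4) :=
  Finset.univ.image (fun i : Fin k => (i, (0 : Fin 4)))

lemma mem_witness_snd {x : Fin k × Fin 4} (hx : x ∈ witnessS k) : x.2 = 0 := by
  simp only [witnessS, Finset.mem_image] at hx
  obtain ⟨i, _, rfl⟩ := hx
  rfl

lemma witness_forest : ((cliquesUnion k).doubleMultigraph).IsInducedForest (witnessS k) := by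
  constructor
  · intro u hu v hv
    rw [mult_eq]
    have hu2 := mem_witness_snd k hu
    have hv2 := mem_witness_snd k hv
    by_cases h : u.1 = v.1 <;> simp [h, m4, hu2, hv2]
  · intro v p hp
    cases p with
    | nil => simp [SimpleGraph.Walk.isCycle_def] at hp
    | @cons _ w _ ha q =>
      have hadj : ((cliquesUnion k).doubleMultigraph).support.Adj ↑v ↑w := ha
      have h2 := ((adj_iff k _ _).1 hadj).2
      exact h2 (((mem_witness_snd k (Finset.mem_coe.1 v.2))).trans
        ((mem_witness_snd k (Finset.mem_coe.1 w.2))).symm)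

lemma witness_card : (witnessS k).card = k := by
  rw [witnessS, Finset.card_image_of_injective _ (fun i j h => congrArg Prod.fst h)]
  simp

lemma forest_card_le (S : Finset (Fin k × Fin 4))
    (hS : ((cliquesUnion k).doubleMultigraph).IsInducedForest S) : S.card ≤ k := by
  classical
  have hinj : Set.InjOn Prod.fst (S : Set (Fin k × Fin 4)) := by
    intro u hu v hv h
    by_contra hne
    have hne2 : u.2 ≠ v.2 := fun h2 => hne (Prod.ext h h2)
    have hle := hS.1 u (Finset.mem_coe.1 hu) v (Finset.mem_coe.1 hv)
    rw [mult_eq, if_pos h] at hle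
    simp [m4, hne2] at hle
  calc S.card = (S.image Prod.fst).card := (Finset.card_image_of_injOn hinj).symm
    _ ≤ Fintype.card (Fin k) := Finset.card_le_univ _
    _ = k := Fintype.card_fin k

lemma forestNum_eq : ((cliquesUnion k).doubleMultigraph).forestNum = k := by
  apply le_antisymm
  · apply csSup_le
    · exact ⟨k, witnessS k, witness_forest k, witness_card k⟩
    · rintro n ⟨S, hS, rfl⟩
      exact forest_card_le k S hS
  · apply le_csSup
    · refine ⟨k, ?_⟩
      rintro n ⟨S, hS, rfl⟩
      exact forest_card_le k S hS
    · exact ⟨witnessS k, witness_forest k, witness_card k⟩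

end forest
end DK4

/-- for every `k ≥ 1`, the disjoint union of `k` copies of `K₄`
with every edge duplicated is a planar multigraph on `n = 4k` vertices with
maximum induced forest of size exactly `k = n / 4`. -/
theorem doubled_K4_union_tight (k : ℕ) (hk : 1 ≤ k) :
    ((cliquesUnion k).doubleMultigraph).IsPlanar ∧
      Nat.card (Fin k × Fin 4) = 4 * k ∧
      ((cliquesUnion k).doubleMultigraph).forestNum = k := by
  refine ⟨⟨DK4.embedding k⟩, ?_, DK4.forestNum_eq k⟩
  simp [Nat.card_eq_fintype_card]
  ring
end

section
/- If every simple planar graph on n vertices admits an acyclic proper 5-coloring, then every planar multigraph M on n vertices with k pairs of vertices joined by parallel edges satisfies a(M) ≥ (2/5)n − k/10. -/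
/-! ### Auxiliary: generic permutation/quotient lemmas -/

namespace AuxPerm

open Equiv Sum

variable {α β γ : Type*}

set_option linter.unusedSectionVars false

lemma invariant_zpow (f : α → γ) (χ : Equiv.Perm α)
    (h : ∀ x, f (χ x) = f x) : ∀ (i : ℤ) (x), f ((χ ^ i) x) = f x := by
  have hn : ∀ (ξ : Equiv.Perm α), (∀ x, f (ξ x) = f x) →
      ∀ (n : ℕ) (x), f ((ξ ^ n) x) = f x := by
    intro ξ hξ n
    induction n with
    | zero => simp
    | succ n ih =>
      intro x
      rw [pow_succ, Equiv.Perm.mul_apply, ih, hξ]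
  have hinv : ∀ x, f (χ⁻¹ x) = f x := by
    intro x
    conv_rhs => rw [← Equiv.apply_symm_apply χ x, h]
    rfl
  intro i x
  rcases i with n | n
  · simpa using hn χ h n x
  · rw [zpow_negSucc]
    simpa using hn χ⁻¹ hinv (n+1) x

lemma permCongr_zpow (e : α ≃ β) (ψ : Equiv.Perm α) (i : ℤ) :
    (e.permCongr ψ) ^ i = e.permCongr (ψ ^ i) := by
  let m : Equiv.Perm α →* Equiv.Perm β :=
    { toFun := fun p => e.permCongr p
      map_one' := by ext x; simp
      map_mul' := by intro p q; ext x; simp }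
  exact (MonoidHom.map_zpow m ψ i).symm

lemma sameCycle_permCongr (e : α ≃ β) (ψ : Equiv.Perm α) (x y : α) :
    (e.permCongr ψ).SameCycle (e x) (e y) ↔ ψ.SameCycle x y := by
  unfold Equiv.Perm.SameCycle
  constructor
  · rintro ⟨i, hi⟩
    refine ⟨i, ?_⟩
    rw [permCongr_zpow] at hi
    simpa using hi
  · rintro ⟨i, hi⟩
    refine ⟨i, ?_⟩
    rw [permCongr_zpow]
    simp [hi]

lemma sumCongr_zpow (f : Equiv.Perm α) (g : Equiv.Perm β) (i : ℤ) :
    (Equiv.sumCongr f g) ^ i = Equiv.sumCongr (f ^ i) (g ^ i) := by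
  have h1 : Equiv.sumCongr f g = Equiv.Perm.sumCongrHom α β (f, g) := rfl
  rw [h1, ← map_zpow]
  rfl

section L1

variable [Finite α] [Finite β] (φ : Equiv.Perm α) (ψ : Equiv.Perm (α ⊕ β))

variable (step : ∀ a, ∃ k, 0 < k ∧ (ψ ^ k) (Sum.inl a) = Sum.inl (φ a) ∧
      ∀ j, 0 < j → j < k → ∃ b, (ψ ^ j) (Sum.inl a) = Sum.inr b)

include step in
lemma fwd : ∀ (n : ℕ) (a : α), ∃ m : ℕ, (ψ ^ m) (Sum.inl a) = Sum.inl ((φ ^ n) a) := by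
  intro n
  induction n with
  | zero => intro a; exact ⟨0, by simp⟩
  | succ n ih =>
    intro a
    obtain ⟨k, -, hk, -⟩ := step a
    obtain ⟨m, hm⟩ := ih (φ a)
    have hps : (φ ^ (n+1)) a = (φ ^ n) (φ a) := by
      rw [pow_succ]; rfl
    refine ⟨m + k, ?_⟩
    rw [pow_add, Equiv.Perm.mul_apply, hk, hm, hps]

include step in
lemma sameCycle_inl_aux : ∀ (n : ℕ) (a a' : α), (ψ ^ n) (Sum.inl a) = Sum.inl a' →
    φ.SameCycle a a' := by
  intro n
  induction n using Nat.strong_induction_on with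
  | _ n IH =>
    intro a a' hn
    rcases Nat.eq_zero_or_pos n with rfl | hpos
    · simp at hn
      exact hn ▸ Equiv.Perm.SameCycle.refl φ a
    obtain ⟨k, hk0, hk, hmid⟩ := step a
    by_cases hlt : n < k
    · obtain ⟨b, hb⟩ := hmid n hpos hlt
      rw [hn] at hb; simp at hb
    · push_neg at hlt
      have hsplit : (ψ ^ (n - k)) (Sum.inl (φ a)) = Sum.inl a' := by
        rw [← hk, ← Equiv.Perm.mul_apply, ← pow_add, Nat.sub_add_cancel hlt, hn]
      have h1 : φ.SameCycle (φ a) a' := IH (n - k) (by omega) _ _ hsplit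
      exact Equiv.Perm.SameCycle.trans ⟨1, by simp⟩ h1

variable (cover : ∀ b : β, ∃ (a : α) (m : ℕ), (ψ ^ m) (Sum.inl a) = Sum.inr b)

include step in
lemma sameCycle_inl_of (a a' : α) (h : φ.SameCycle a a') :
    ψ.SameCycle (Sum.inl a) (Sum.inl a') := by
  obtain ⟨n, -, hn⟩ := h.exists_pow_eq'
  obtain ⟨m, hm⟩ := fwd φ ψ step n a
  exact ⟨m, by rw [zpow_natCast, hm, hn]⟩

include step cover in
noncomputable def facesEquiv :
    Quotient (Multigraph.cycleSetoid φ) ≃ Quotient (Multigraph.cycleSetoid ψ) := by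
  letI s1 := Multigraph.cycleSetoid φ
  letI s2 := Multigraph.cycleSetoid ψ
  refine Equiv.ofBijective
    (Quotient.map' Sum.inl (fun a a' h => sameCycle_inl_of φ ψ step a a' h)) ⟨?_, ?_⟩
  · intro x y
    induction x using Quotient.inductionOn' with
    | _ x =>
    induction y using Quotient.inductionOn' with
    | _ y =>
    intro h
    replace h := Quotient.exact' h
    obtain ⟨i, -, hi⟩ := Equiv.Perm.SameCycle.exists_pow_eq' h
    exact Quotient.sound' (sameCycle_inl_aux φ ψ step i _ _ hi)
  · intro z
    induction z using Quotient.inductionOn' with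
    | _ z =>
      rcases z with a | b
      · exact ⟨Quotient.mk' a, rfl⟩
      · obtain ⟨a, m, hm⟩ := cover b
        refine ⟨Quotient.mk' a, ?_⟩
        exact Quotient.sound' ⟨m, by rw [zpow_natCast, hm]⟩

lemma facesEquiv_mk (a : α) :
    facesEquiv φ ψ step cover (Quotient.mk (Multigraph.cycleSetoid φ) a)
      = Quotient.mk (Multigraph.cycleSetoid ψ) (Sum.inl a) := rfl

end L1
end AuxPerm

/-! ### The subdivision construction -/

namespace Subdiv

open Multigraph Sum

variable {V : Type} (M : Multigraph V)

/-- The darts corresponding to duplicate parallel edges (index ≥ 1). -/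
def X := {d : M.Dart // 0 < d.2.val}

/-- The simple graph obtained from `M` by keeping, for each adjacent pair, the
index-`0` edge, and subdividing each other edge twice (one new vertex per dart). -/
def G : SimpleGraph (V ⊕ X M) where
  Adj a b := match a, b with
    | inl u, inl v => M.support.Adj u v
    | inl u, inr x => x.1.1.1 = u
    | inr x, inl u => x.1.1.1 = u
    | inr x, inr y => x.1 = M.dartRev y.1
  symm := by
    constructor
    rintro (u | x) (v | y) h
    · exact h.symm
    · exact h
    · exact h
    · show y.1 = M.dartRev x.1
      rw [h]
      exact (M.dartRev_involutive y.1).symm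
  loopless := by
    constructor
    rintro (u | x) h
    · exact M.support.loopless.irrefl u h
    · have h2 : x.1.1.1 = x.1.1.2 := congrArg (fun d => d.1.1) h
      have hf := x.1.2
      rw [← h2, M.loopless] at hf
      exact hf.elim0

lemma rev_snd_val (d : M.Dart) : (M.dartRev d).2.val = d.2.val := rfl

/-- Two darts of a simple graph's multigraph with the same vertex pair agree. -/
lemma tm_dart_ext {W : Type} (H : SimpleGraph W) (d e : H.toMultigraph.Dart)
    (h : d.1 = e.1) : d = e := by
  rcases d with ⟨p, j⟩
  rcases e with ⟨p', j'⟩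
  dsimp at h
  subst h
  have h1 : H.toMultigraph.mult p.1 p.2 ≤ 1 := by
    simp only [SimpleGraph.toMultigraph]
    split <;> simp
  have h2 := j.isLt
  have h3 := j'.isLt
  exact congrArg (Sigma.mk p) (Fin.ext (by omega))

lemma tm_mult_pos {W : Type} (H : SimpleGraph W) (a b : W) :
    0 < H.toMultigraph.mult a b ↔ H.Adj a b := by
  classical
  constructor
  · intro h
    by_contra hn
    have h0 : H.toMultigraph.mult a b = 0 := by simp [SimpleGraph.toMultigraph, hn]
    omega
  · intro h
    have h0 : H.toMultigraph.mult a b = 1 := by simp [SimpleGraph.toMultigraph, h]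
    omega

lemma tm_support_adj {W : Type} (H : SimpleGraph W) (a b : W) :
    H.toMultigraph.support.Adj a b ↔ H.Adj a b := tm_mult_pos H a b

/-- Darts of the multigraph of a simple graph are just ordered adjacent pairs. -/
def simpleDartEquiv {W : Type} (H : SimpleGraph W) :
    H.toMultigraph.Dart ≃ {p : W × W // H.Adj p.1 p.2} where
  toFun d := ⟨d.1, by
    by_cases h : H.Adj d.1.1 d.1.2
    · exact h
    · exfalso
      have hd := d.2
      have h0 : H.toMultigraph.mult d.1.1 d.1.2 = 0 := by
        simp [SimpleGraph.toMultigraph, h]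
      rw [h0] at hd
      exact hd.elim0⟩
  invFun p := ⟨p.1, ⟨0, by simp [SimpleGraph.toMultigraph, p.2]⟩⟩
  left_inv := fun d => tm_dart_ext H _ _ rfl
  right_inv := by
    rintro ⟨p, h⟩
    rfl

/-- The darts of the subdivided graph, abstractly. -/
def Z := M.Dart ⊕ (X M × Bool)

def e0 : (M.Dart ⊕ (X M × Bool)) → {p : (V ⊕ X M) × (V ⊕ X M) // (G M).Adj p.1 p.2}
  | inl d =>
    if h : d.2.val = 0 then ⟨(inl d.1.1, inl d.1.2), d.2.pos⟩
    else ⟨(inl d.1.1, inr ⟨d, Nat.pos_of_ne_zero h⟩), rfl⟩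
  | inr (x, false) => ⟨(inr x, inl x.1.1.1), rfl⟩
  | inr (x, true) => ⟨(inr x, inr ⟨M.dartRev x.1, x.2⟩), (M.dartRev_involutive x.1).symm⟩

def e0inv : {p : (V ⊕ X M) × (V ⊕ X M) // (G M).Adj p.1 p.2}
    → (M.Dart ⊕ (X M × Bool)) := fun y =>
  match y with
  | ⟨(inl u, inl v), h⟩ => inl ⟨(u, v), ⟨0, h⟩⟩
  | ⟨(inl _, inr x), _⟩ => inl x.1
  | ⟨(inr x, inl _), _⟩ => inr (x, false)
  | ⟨(inr x, inr _), _⟩ => inr (x, true)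

lemma e0_leftInv : Function.LeftInverse (e0inv M) (e0 M) := by
  rintro (d | ⟨x, _ | _⟩)
  · by_cases h : d.2.val = 0
    · simp only [e0, dif_pos h, e0inv]
      congr 1
      exact congrArg (Sigma.mk _) (Fin.ext h.symm)
    · simp only [e0, dif_neg h, e0inv]
  · simp only [e0, e0inv]
  · simp only [e0, e0inv]

lemma e0_rightInv : Function.RightInverse (e0inv M) (e0 M) := by
  rintro ⟨⟨(u | x), (v | y)⟩, h⟩
  · simp only [e0inv, e0]
    simp
  · simp only [e0inv, e0]
    have hx : y.1.2.val ≠ 0 := by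
      have := y.2
      omega
    rw [dif_neg hx]
    have h' : y.1.1.1 = u := h
    subst h'
    rfl
  · simp only [e0inv, e0]
    have h' : x.1.1.1 = v := h
    subst h'
    rfl
  · simp only [e0inv, e0]
    have h' : x.1 = M.dartRev y.1 := h
    have h2 : (⟨M.dartRev x.1, x.2⟩ : X M) = y := by
      apply Subtype.ext
      show M.dartRev x.1 = y.1
      rw [h']
      exact M.dartRev_involutive y.1
    apply Subtype.ext
    show ((inr x : V ⊕ X M), (inr (⟨M.dartRev x.1, x.2⟩ : X M) : V ⊕ X M)) = (inr x, inr y)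
    rw [h2]

def e0Equiv : (M.Dart ⊕ (X M × Bool)) ≃ {p : (V ⊕ X M) × (V ⊕ X M) // (G M).Adj p.1 p.2} :=
  ⟨e0 M, e0inv M, e0_leftInv M, e0_rightInv M⟩

/-- The dart equivalence. -/
def EZ : (M.Dart ⊕ (X M × Bool)) ≃ (G M).toMultigraph.Dart :=
  (e0Equiv M).trans (simpleDartEquiv (G M)).symm

lemma EZ_fst (z : M.Dart ⊕ (X M × Bool)) : (EZ M z).1 = (e0 M z).1 := rfl

lemma EZ_tail_inl (d : M.Dart) : (EZ M (inl d)).1.1 = inl d.1.1 := by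
  rw [EZ_fst]
  by_cases h : d.2.val = 0 <;> simp [e0, h]

lemma EZ_tail_inr (x : X M) (s : Bool) : (EZ M (inr (x, s))).1.1 = inr x := by
  rw [EZ_fst]
  cases s <;> rfl

end Subdiv

namespace Subdiv

open Multigraph Sum Equiv

variable {V : Type} (M : Multigraph V)

def rz : (M.Dart ⊕ (X M × Bool)) → (M.Dart ⊕ (X M × Bool))
  | inl d =>
    if h : d.2.val = 0 then inl (M.dartRev d) else inr (⟨d, Nat.pos_of_ne_zero h⟩, false)
  | inr (x, false) => inl x.1
  | inr (x, true) => inr (⟨M.dartRev x.1, x.2⟩, true)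

lemma rz_invol : Function.Involutive (rz M) := by
  rintro (d | ⟨x, _ | _⟩)
  · by_cases h : d.2.val = 0
    · have h2 : (M.dartRev d).2.val = 0 := h
      simp only [rz, dif_pos h, dif_pos h2, M.dartRev_involutive d]
    · simp only [rz, dif_neg h]
  · simp only [rz]
    have h : x.1.2.val ≠ 0 := by have := x.2; omega
    rw [dif_neg h]
    exact congrArg (fun y => inr (y, false)) (Subtype.ext rfl)
  · simp only [rz]
    rw [show (⟨M.dartRev (M.dartRev x.1), x.2⟩ : X M) = x from Subtype.ext (M.dartRev_involutive x.1)]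

def rzPerm : Equiv.Perm (M.Dart ⊕ (X M × Bool)) :=
  Function.Involutive.toPerm _ (rz_invol M)

def boolNot : Equiv.Perm Bool := Function.Involutive.toPerm not Bool.not_not

variable (rot : Equiv.Perm M.Dart)

def sigmaZ : Equiv.Perm (M.Dart ⊕ (X M × Bool)) :=
  Equiv.sumCongr rot (Equiv.prodCongr (Equiv.refl (X M)) boolNot)

def psiZ : Equiv.Perm (M.Dart ⊕ (X M × Bool)) :=
  (rzPerm M).trans (sigmaZ M rot)

lemma psiZ_apply (z : M.Dart ⊕ (X M × Bool)) :
    psiZ M rot z = sigmaZ M rot (rz M z) := rfl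

lemma psiZ_inl_zero (d : M.Dart) (h : d.2.val = 0) :
    psiZ M rot (inl d) = inl (rot (M.dartRev d)) := by
  rw [psiZ_apply]
  simp only [rz, dif_pos h]
  rfl

lemma psiZ_inl_pos (d : M.Dart) (h : d.2.val ≠ 0) :
    psiZ M rot (inl d) = inr (⟨d, Nat.pos_of_ne_zero h⟩, true) := by
  rw [psiZ_apply]
  simp only [rz, dif_neg h]
  rfl

lemma psiZ_inr_true (x : X M) :
    psiZ M rot (inr (x, true)) = inr (⟨M.dartRev x.1, x.2⟩, false) := by
  rw [psiZ_apply]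
  rfl

lemma psiZ_inr_false (x : X M) :
    psiZ M rot (inr (x, false)) = inl (rot x.1) := by
  rw [psiZ_apply]
  rfl

end Subdiv

namespace Subdiv

open Multigraph Sum Equiv

lemma perm_pow_two {α : Type*} (ψ : Equiv.Perm α) (x : α) : (ψ ^ 2) x = ψ (ψ x) := by
  rw [pow_two]; rfl

lemma perm_pow_three {α : Type*} (ψ : Equiv.Perm α) (x : α) : (ψ ^ 3) x = ψ (ψ (ψ x)) := by
  rw [pow_succ]
  show ψ ((ψ ^ 2) x) = _
  rw [perm_pow_two]

variable {V : Type} (M : Multigraph V)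

lemma EZ_rev (z : M.Dart ⊕ (X M × Bool)) :
    (G M).toMultigraph.dartRev (EZ M z) = EZ M (rz M z) := by
  apply tm_dart_ext
  show ((EZ M z).1.2, (EZ M z).1.1) = (e0 M (rz M z)).1
  rcases z with d | ⟨x, s⟩
  · by_cases h : d.2.val = 0
    · have h2 : (M.dartRev d).2.val = 0 := h
      rw [EZ_fst]
      simp only [e0, rz, dif_pos h, dif_pos h2]
      rfl
    · rw [EZ_fst]
      simp only [e0, rz, dif_neg h]
  · cases s
    · have h : x.1.2.val ≠ 0 := by have := x.2; omega
      rw [EZ_fst]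
      simp only [e0, rz, dif_neg h]
      exact congrArg (fun y => ((inl x.1.1.1 : V ⊕ X M), (inr y : V ⊕ X M)))
        (Subtype.ext rfl).symm
    · rw [EZ_fst]
      simp only [e0, rz]
      exact congrArg (fun y => ((inr ⟨M.dartRev x.1, x.2⟩ : V ⊕ X M), (inr y : V ⊕ X M)))
        (Subtype.ext (M.dartRev_involutive x.1)).symm

variable (rot : Equiv.Perm M.Dart)

/-- The rotation system on the subdivided graph. -/
def rotG : Equiv.Perm ((G M).toMultigraph.Dart) :=
  (EZ M).permCongr (sigmaZ M rot)

lemma facePermG_eq :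
    (G M).toMultigraph.facePerm (rotG M rot) = (EZ M).permCongr (psiZ M rot) := by
  ext y
  show (rotG M rot) ((G M).toMultigraph.dartRev y) = (EZ M) ((psiZ M rot) ((EZ M).symm y))
  conv_lhs => rw [← Equiv.apply_symm_apply (EZ M) y]
  rw [EZ_rev]
  show (EZ M) ((sigmaZ M rot) ((EZ M).symm (EZ M (rz M ((EZ M).symm y))))) = _
  rw [Equiv.symm_apply_apply]
  rfl

lemma stepPsi : ∀ d : M.Dart, ∃ k, 0 < k ∧
    ((psiZ M rot) ^ k) (inl d) = inl (M.facePerm rot d) ∧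
    ∀ j, 0 < j → j < k → ∃ b, ((psiZ M rot) ^ j) (inl d) = inr b := by
  intro d
  have hface : M.facePerm rot d = rot (M.dartRev d) := rfl
  by_cases h : d.2.val = 0
  · refine ⟨1, one_pos, ?_, ?_⟩
    · rw [pow_one, psiZ_inl_zero M rot d h, hface]
    · intro j hj1 hj2; omega
  · refine ⟨3, by norm_num, ?_, ?_⟩
    · rw [perm_pow_three, psiZ_inl_pos M rot d h]; erw [psiZ_inr_true, psiZ_inr_false, hface]
    · intro j hj1 hj2
      interval_cases j
      · exact ⟨_, by rw [pow_one, psiZ_inl_pos M rot d h]⟩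
      · exact ⟨_, by rw [perm_pow_two, psiZ_inl_pos M rot d h]; erw [psiZ_inr_true]⟩

lemma coverPsi : ∀ b : X M × Bool, ∃ (a : M.Dart) (m : ℕ),
    ((psiZ M rot) ^ m) (inl a) = inr b := by
  rintro ⟨x, _ | _⟩
  · refine ⟨M.dartRev x.1, 2, ?_⟩
    have hv : (M.dartRev x.1).2.val ≠ 0 := by rw [rev_snd_val]; have := x.2; omega
    rw [perm_pow_two, psiZ_inl_pos M rot _ hv]; erw [psiZ_inr_true]
    exact congrArg (fun y => (inr (y, false) : M.Dart ⊕ (X M × Bool)))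
      (Subtype.ext (M.dartRev_involutive x.1))
  · refine ⟨x.1, 1, ?_⟩
    have hv : x.1.2.val ≠ 0 := by have := x.2; omega
    rw [pow_one, psiZ_inl_pos M rot _ hv]
    exact congrArg (fun y => (inr (y, true) : M.Dart ⊕ (X M × Bool))) (Subtype.ext rfl)

variable [Finite V]

instance : Finite (X M) := Subtype.finite

/-- The equivalence between faces of `M` and faces of the subdivision. -/
noncomputable def facesEquivG : M.Faces rot ≃ (G M).toMultigraph.Faces (rotG M rot) :=
  (AuxPerm.facesEquiv (M.facePerm rot) (psiZ M rot) (stepPsi M rot) (coverPsi M rot)).trans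
    (Quotient.congr (EZ M) (by
      intro a b
      show (psiZ M rot).SameCycle a b ↔
        ((G M).toMultigraph.facePerm (rotG M rot)).SameCycle (EZ M a) (EZ M b)
      rw [facePermG_eq]
      exact (AuxPerm.sameCycle_permCongr (EZ M) (psiZ M rot) a b).symm))

lemma facesEquivG_mk (d : M.Dart) :
    facesEquivG M rot (Quotient.mk (cycleSetoid (M.facePerm rot)) d)
      = Quotient.mk (cycleSetoid ((G M).toMultigraph.facePerm (rotG M rot)))
          (EZ M (inl d)) := by
  have h1 := AuxPerm.facesEquiv_mk (M.facePerm rot) (psiZ M rot)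
    (stepPsi M rot) (coverPsi M rot) d
  simp only [facesEquivG, Equiv.trans_apply, h1]
  rfl

end Subdiv

namespace Subdiv

open Multigraph Sum Equiv

variable {V : Type} (M : Multigraph V)

lemma sigmaZ_inl (rot : Equiv.Perm M.Dart) (d : M.Dart) :
    sigmaZ M rot (inl d) = inl (rot d) := rfl

lemma sigmaZ_inr (rot : Equiv.Perm M.Dart) (x : X M) (s : Bool) :
    sigmaZ M rot (inr (x, s)) = inr (x, !s) := rfl

lemma rotG_EZ (rot : Equiv.Perm M.Dart) (z : M.Dart ⊕ (X M × Bool)) :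
    rotG M rot (EZ M z) = EZ M (sigmaZ M rot z) := by
  simp [rotG]

lemma rotG_tail (rot : Equiv.Perm M.Dart) (hrt : ∀ d, (rot d).1.1 = d.1.1) :
    ∀ y : (G M).toMultigraph.Dart, ((rotG M rot) y).1.1 = y.1.1 := by
  intro y
  have hy : y = EZ M ((EZ M).symm y) := (Equiv.apply_symm_apply _ _).symm
  rw [hy, rotG_EZ]
  rcases (EZ M).symm y with d | ⟨x, s⟩
  · rw [sigmaZ_inl, EZ_tail_inl, EZ_tail_inl, hrt]
  · rw [sigmaZ_inr, EZ_tail_inr, EZ_tail_inr]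

lemma sameCycle_sigmaZ_inl (rot : Equiv.Perm M.Dart) (d e : M.Dart)
    (h : rot.SameCycle d e) :
    (sigmaZ M rot).SameCycle (inl d) (inl e) := by
  obtain ⟨i, hi⟩ := h
  refine ⟨i, ?_⟩
  show ((Equiv.sumCongr rot (Equiv.prodCongr (Equiv.refl (X M)) boolNot)) ^ i) (inl d) = inl e
  rw [AuxPerm.sumCongr_zpow]
  simp [hi]

lemma rotG_cyclic (rot : Equiv.Perm M.Dart)
    (hcy : ∀ d e : M.Dart, d.1.1 = e.1.1 → rot.SameCycle d e) :
    ∀ y1 y2 : (G M).toMultigraph.Dart, y1.1.1 = y2.1.1 →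
      (rotG M rot).SameCycle y1 y2 := by
  intro y1 y2 h
  obtain ⟨z1, rfl⟩ : ∃ z, y1 = EZ M z := ⟨_, (Equiv.apply_symm_apply _ _).symm⟩
  obtain ⟨z2, rfl⟩ : ∃ z, y2 = EZ M z := ⟨_, (Equiv.apply_symm_apply _ _).symm⟩
  have key : (sigmaZ M rot).SameCycle z1 z2 := by
    rcases z1 with d1 | ⟨x1, s1⟩ <;> rcases z2 with d2 | ⟨x2, s2⟩
    · rw [EZ_tail_inl, EZ_tail_inl] at h
      exact sameCycle_sigmaZ_inl M rot d1 d2 (hcy d1 d2 (by injection h))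
    · rw [EZ_tail_inl, EZ_tail_inr] at h
      exact absurd h (by simp)
    · rw [EZ_tail_inr, EZ_tail_inl] at h
      exact absurd h (by simp)
    · rw [EZ_tail_inr, EZ_tail_inr] at h
      have hx : x1 = x2 := by injection h
      subst hx
      cases s1 <;> cases s2
      · exact Equiv.Perm.SameCycle.refl _ _
      · exact ⟨1, by simp [sigmaZ_inr]⟩
      · exact ⟨1, by simp [sigmaZ_inr]⟩
      · exact Equiv.Perm.SameCycle.refl _ _
  rw [show rotG M rot = (EZ M).permCongr (sigmaZ M rot) from rfl]
  exact (AuxPerm.sameCycle_permCongr (EZ M) (sigmaZ M rot) _ _).mpr key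

lemma sameCycle_comp {V' : Type} (N : Multigraph V') (rot : Equiv.Perm N.Dart)
    (hrt : ∀ d, (rot d).1.1 = d.1.1) {y z : N.Dart}
    (h : (N.facePerm rot).SameCycle y z) :
    N.support.connectedComponentMk y.1.1 = N.support.connectedComponentMk z.1.1 := by
  obtain ⟨i, hi⟩ := h
  have key : ∀ x : N.Dart, N.support.connectedComponentMk ((N.facePerm rot) x).1.1
      = N.support.connectedComponentMk x.1.1 := by
    intro x
    have h1 : ((N.facePerm rot) x).1.1 = x.1.2 := by
      show (rot (N.dartRev x)).1.1 = x.1.2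
      rw [hrt]
      rfl
    rw [h1]
    exact (SimpleGraph.ConnectedComponent.connectedComponentMk_eq_of_adj
      (show N.support.Adj x.1.1 x.1.2 from x.2.pos)).symm
  have h2 := AuxPerm.invariant_zpow (fun d => N.support.connectedComponentMk d.1.1)
    (N.facePerm rot) key i y
  rw [hi] at h2
  exact h2.symm

/-- Lifting a map constant on edges to connected components. -/
lemma lift_walk {W : Type} {H : SimpleGraph W} {β : Sort*} (f : W → β)
    (h : ∀ v w, H.Adj v w → f v = f w) :
    ∀ (v w : W) (p : H.Walk v w), p.IsPath → f v = f w := by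
  intro v w p hp
  clear hp
  induction p with
  | nil => rfl
  | cons ha _ ih => exact (h _ _ ha).trans ih

def homInl : M.support →g (G M).toMultigraph.support where
  toFun := inl
  map_rel' := by
    intro a b h
    exact (tm_support_adj (G M) _ _).mpr h

def projW : V ⊕ X M → V
  | inl u => u
  | inr x => x.1.1.1

lemma projW_adj : ∀ v w, (G M).toMultigraph.support.Adj v w →
    M.support.connectedComponentMk (projW M v) = M.support.connectedComponentMk (projW M w) := by
  intro v w h
  rw [tm_support_adj] at h
  rcases v with u | x <;> rcases w with u' | y
  · exact SimpleGraph.ConnectedComponent.connectedComponentMk_eq_of_adj h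
  · have h' : y.1.1.1 = u := h
    rw [show projW M (inl u) = u from rfl, show projW M (inr y) = y.1.1.1 from rfl, h']
  · have h' : x.1.1.1 = u' := h
    rw [show projW M (inl u') = u' from rfl, show projW M (inr x) = x.1.1.1 from rfl, h']
  · have h' : x.1 = M.dartRev y.1 := h
    show M.support.connectedComponentMk x.1.1.1 = M.support.connectedComponentMk y.1.1.1
    rw [h']
    show M.support.connectedComponentMk y.1.1.2 = M.support.connectedComponentMk y.1.1.1
    exact (SimpleGraph.ConnectedComponent.connectedComponentMk_eq_of_adj
      (show M.support.Adj y.1.1.1 y.1.1.2 from y.1.2.pos)).symm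

/-- The equivalence of connected components. -/
noncomputable def cE : M.support.ConnectedComponent
    ≃ (G M).toMultigraph.support.ConnectedComponent where
  toFun := SimpleGraph.ConnectedComponent.map (homInl M)
  invFun := SimpleGraph.ConnectedComponent.lift
    (fun w => M.support.connectedComponentMk (projW M w)) (lift_walk _ (projW_adj M))
  left_inv := by
    intro c
    induction c using SimpleGraph.ConnectedComponent.ind with
    | _ v => rfl
  right_inv := by
    intro c
    induction c using SimpleGraph.ConnectedComponent.ind with
    | _ w =>
      rcases w with u | x
      · rfl
      · show (G M).toMultigraph.support.connectedComponentMk (inl x.1.1.1)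
          = (G M).toMultigraph.support.connectedComponentMk (inr x)
        exact SimpleGraph.ConnectedComponent.connectedComponentMk_eq_of_adj
          ((tm_support_adj (G M) _ _).mpr rfl)

lemma cE_mk (u : V) : cE M (M.support.connectedComponentMk u)
    = (G M).toMultigraph.support.connectedComponentMk (inl u) := rfl

/-- The equivalence of components containing darts. -/
noncomputable def dcE : M.DartComp ≃ (G M).toMultigraph.DartComp :=
  Equiv.subtypeEquiv (cE M) (by
    intro c
    constructor
    · rintro ⟨d, hd⟩
      refine ⟨EZ M (inl d), ?_⟩
      rw [show (EZ M (inl d)).1.1 = inl d.1.1 from EZ_tail_inl M d, ← hd]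
      exact (cE_mk M _).symm
    · rintro ⟨d', hd'⟩
      obtain ⟨z, rfl⟩ : ∃ z, d' = EZ M z := ⟨_, (Equiv.apply_symm_apply _ _).symm⟩
      rcases z with d | ⟨x, s⟩
      · rw [EZ_tail_inl, ← cE_mk] at hd'
        exact ⟨d, (cE M).injective hd'⟩
      · rw [EZ_tail_inr] at hd'
        have hadj : (G M).toMultigraph.support.connectedComponentMk (inr x)
            = (G M).toMultigraph.support.connectedComponentMk (inl x.1.1.1) :=
          SimpleGraph.ConnectedComponent.connectedComponentMk_eq_of_adj
            ((tm_support_adj (G M) (inr x) (inl x.1.1.1)).mpr rfl)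
        rw [hadj, ← cE_mk] at hd'
        exact ⟨x.1, (cE M).injective hd'⟩)

end Subdiv

namespace Subdiv

open Multigraph Sum Equiv

variable {V : Type} (M : Multigraph V) [Finite V]

lemma faceDartComp_eq (rot : Equiv.Perm M.Dart) (hrt : ∀ d, (rot d).1.1 = d.1.1)
    (F : M.Faces rot) :
    (G M).toMultigraph.faceDartComp (rotG M rot) (facesEquivG M rot F)
      = dcE M (M.faceDartComp rot F) := by
  apply Subtype.ext
  show (G M).toMultigraph.support.connectedComponentMk ((facesEquivG M rot F).out.1.1)
      = ((dcE M) (M.faceDartComp rot F)).1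
  have hval : ((dcE M) (M.faceDartComp rot F)).1
      = cE M (M.support.connectedComponentMk F.out.1.1) := rfl
  rw [hval]
  have h1 : facesEquivG M rot F
      = Quotient.mk (cycleSetoid ((G M).toMultigraph.facePerm (rotG M rot)))
          (EZ M (inl F.out)) := by
    conv_lhs => rw [← Quotient.out_eq F]
    exact facesEquivG_mk M rot F.out
  have h2 : ((G M).toMultigraph.facePerm (rotG M rot)).SameCycle
      ((facesEquivG M rot F).out) (EZ M (inl F.out)) := by
    rw [h1]
    exact Quotient.mk_out
      (s := cycleSetoid ((G M).toMultigraph.facePerm (rotG M rot))) (EZ M (inl F.out))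
  have h3 := sameCycle_comp (G M).toMultigraph (rotG M rot) (rotG_tail M rot hrt) h2
  rw [h3, EZ_tail_inl, cE_mk]

lemma edgeCount_G : (G M).toMultigraph.edgeCount = M.edgeCount + Nat.card (X M) := by
  have h1 : Nat.card ((G M).toMultigraph.Dart) = Nat.card M.Dart + Nat.card (X M) * 2 := by
    rw [Nat.card_congr (EZ M).symm, Nat.card_sum, Nat.card_prod]
    have hb : Nat.card Bool = 2 := by simp [Nat.card_eq_fintype_card]
    rw [hb]
  show Nat.card ((G M).toMultigraph.Dart) / 2 = Nat.card M.Dart / 2 + Nat.card (X M)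
  rw [h1, Nat.add_mul_div_right _ _ (by norm_num : (0:ℕ) < 2)]

lemma comps_G : (G M).toMultigraph.components = M.components :=
  Nat.card_congr (cE M).symm

lemma ecomps_G : (G M).toMultigraph.edgeComponents = M.edgeComponents :=
  Nat.card_congr (dcE M).symm

lemma faces_G (rot : Equiv.Perm M.Dart) :
    Nat.card ((G M).toMultigraph.Faces (rotG M rot)) = Nat.card (M.Faces rot) :=
  Nat.card_congr (facesEquivG M rot).symm

lemma cardW : Nat.card (V ⊕ X M) = Nat.card V + Nat.card (X M) := Nat.card_sum

/-- The plane embedding of the subdivision. -/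
noncomputable def planeEmb (Emb : M.PlaneEmbedding) : (G M).toMultigraph.PlaneEmbedding where
  rot := rotG M Emb.rot
  rot_tail := rotG_tail M Emb.rot Emb.rot_tail
  rot_cyclic := fun d e h => rotG_cyclic M Emb.rot Emb.rot_cyclic d e h
  outOrbit c := facesEquivG M Emb.rot (Emb.outOrbit ((dcE M).symm c))
  outOrbit_comp c := by
    rw [faceDartComp_eq M Emb.rot Emb.rot_tail, Emb.outOrbit_comp, Equiv.apply_symm_apply]
  encl c := (Emb.encl ((dcE M).symm c)).map (facesEquivG M Emb.rot)
  depth c := Emb.depth ((dcE M).symm c)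
  encl_depth := by
    intro c F h
    change Option.map (⇑(facesEquivG M Emb.rot)) (Emb.encl ((dcE M).symm c)) = some F at h
    show Emb.depth ((dcE M).symm ((G M).toMultigraph.faceDartComp (rotG M Emb.rot) F))
      < Emb.depth ((dcE M).symm c)
    rcases hE : Emb.encl ((dcE M).symm c) with _ | F0
    · rw [hE] at h
      simp at h
    · rw [hE] at h
      simp only [Option.map_some] at h
      obtain rfl : (facesEquivG M Emb.rot) F0 = F := Option.some.inj h
      rw [faceDartComp_eq M Emb.rot Emb.rot_tail, Equiv.symm_apply_apply]
      exact Emb.encl_depth _ _ hE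
  euler := by
    rw [comps_G, ecomps_G, edgeCount_G, cardW, faces_G]
    have h0 := Emb.euler
    omega

theorem isPlanar_G (hM : M.IsPlanar) : (G M).toMultigraph.IsPlanar :=
  ⟨planeEmb M hM.some⟩

end Subdiv

section MainProof

open Multigraph Finset

lemma acyclic_of_hom {A B : Type} {GA : SimpleGraph A} {GB : SimpleGraph B}
    (f : GA →g GB) (hf : Function.Injective f) (h : GB.IsAcyclic) : GA.IsAcyclic := by
  intro v w hw
  exact h (w.map f) (hw.map hf)

lemma sym2_eq_of_mem {α : Type*} {q : Sym2 α} {x y : α} (hxy : x ≠ y)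
    (hx : x ∈ q) (hy : y ∈ q) : q = s(x, y) := by
  induction q using Sym2.inductionOn with
  | _ a b =>
    rw [Sym2.mem_iff] at hx hy
    rcases hx with rfl | rfl
    · rcases hy with rfl | rfl
      · exact absurd rfl hxy
      · rfl
    · rcases hy with rfl | rfl
      · exact Sym2.eq_swap
      · exact absurd rfl hxy

theorem forestNum_ge_of_acyclic_coloring'
    (h5 : ∀ (W : Type) [Fintype W] (G : SimpleGraph W), G.toMultigraph.IsPlanar →
      ∃ C : W → Fin 5, (∀ u v, G.Adj u v → C u ≠ C v) ∧
        ∀ i j : Fin 5, (G.induce {v | C v = i ∨ C v = j}).IsAcyclic)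
    {V : Type} [Fintype V] (M : Multigraph V) (hM : M.IsPlanar) :
    (2 / 5 : ℚ) * Nat.card V - (M.parallelPairs : ℚ) / 10 ≤ M.forestNum := by
  haveI : Finite V := Finite.of_fintype V
  letI : DecidableEq V := Classical.decEq V
  haveI : Fintype (Subdiv.X M) := Fintype.ofFinite _
  obtain ⟨C, hprop, hacyc⟩ := h5 (V ⊕ Subdiv.X M) (Subdiv.G M) (Subdiv.isPlanar_G M hM)
  set c : V → Fin 5 := fun v => C (Sum.inl v) with hc
  letI : DecidablePred (fun p : Sym2 V => ∃ a b, p = s(a,b) ∧ 2 ≤ M.mult a b) :=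
    fun _ => Classical.propDecidable _
  set P : Finset (Sym2 V) :=
    Finset.univ.filter (fun p => ∃ a b, p = s(a,b) ∧ 2 ≤ M.mult a b) with hPdef
  have hPcard : M.parallelPairs = P.card := by
    rw [Multigraph.parallelPairs, Nat.card_eq_fintype_card, hPdef]
    convert Fintype.card_subtype _
  set PC : Finset (Sym2 (Fin 5)) := Finset.univ.filter (fun q => ¬ q.IsDiag) with hPCdef
  have hPC10 : PC.card = 10 := by rw [hPCdef]; decide
  have hcolor : ∀ a : Fin 5, (PC.filter (fun q => a ∈ q)).card = 4 := by
    rw [hPCdef]; decide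
  have hpair : ∀ a b : Fin 5, a ≠ b → ∀ q ∈ PC, (a ∈ q ∧ b ∈ q) → q = s(a, b) := by
    intro a b hab q hq ⟨ha, hb⟩
    exact sym2_eq_of_mem hab ha hb
  set Sq : Sym2 (Fin 5) → Finset V := fun q => Finset.univ.filter (fun v => c v ∈ q) with hSq
  letI : ∀ q : Sym2 (Fin 5), DecidablePred (fun p : Sym2 V => ∀ a ∈ p, c a ∈ q) :=
    fun _ _ => Classical.propDecidable _
  set Bq : Sym2 (Fin 5) → Finset (Sym2 V) := fun q => P.filter (fun p => ∀ a ∈ p, c a ∈ q)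
    with hBq
  set pick : Sym2 V → V := fun p => p.out.1 with hpick
  have hpick_mem : ∀ p : Sym2 V, pick p ∈ p := fun p => Sym2.out_fst_mem p
  set Tq : Sym2 (Fin 5) → Finset V := fun q => Sq q \ (Bq q).image pick with hTq
  -- membership facts
  have hT_sub : ∀ q, ∀ v ∈ Tq q, c v ∈ q := by
    intro q v hv
    have h1 : v ∈ Sq q := (Finset.mem_sdiff.mp hv).1
    exact (Finset.mem_filter.mp h1).2
  -- each Tq is an induced forest
  have hforest : ∀ q, M.IsInducedForest (Tq q) := by
    intro q
    constructor
    · intro u hu v hv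
      by_contra hm
      push_neg at hm
      have huv : u ≠ v := by
        rintro rfl
        rw [M.loopless] at hm
        omega
      have hp : s(u,v) ∈ P := by
        rw [hPdef]
        refine Finset.mem_filter.mpr ⟨Finset.mem_univ _, ⟨u, v, rfl, by omega⟩⟩
      have hb : s(u,v) ∈ Bq q := by
        rw [hBq]
        refine Finset.mem_filter.mpr ⟨hp, ?_⟩
        intro a ha
        rw [Sym2.mem_iff] at ha
        rcases ha with rfl | rfl
        · exact hT_sub q _ hu
        · exact hT_sub q _ hv
      have himg : pick s(u,v) ∈ (Bq q).image pick := Finset.mem_image_of_mem _ hb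
      have hmem := hpick_mem s(u,v)
      rw [Sym2.mem_iff] at hmem
      rcases hmem with h1 | h1
      · exact (Finset.mem_sdiff.mp hu).2 (h1 ▸ himg)
      · exact (Finset.mem_sdiff.mp hv).2 (h1 ▸ himg)
    · -- acyclicity
      induction q using Sym2.inductionOn with
      | _ i j =>
        have hac := hacyc i j
        have hmemb : ∀ x : ((Tq s(i,j) : Finset V) : Set V),
            Sum.inl x.1 ∈ {v : V ⊕ Subdiv.X M | C v = i ∨ C v = j} := by
          intro x
          have hx : x.1 ∈ Tq s(i,j) := x.2
          have h1 : c x.1 ∈ s(i,j) := hT_sub s(i,j) x.1 hx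
          rw [Sym2.mem_iff] at h1
          exact h1
        refine acyclic_of_hom
          (GA := M.support.induce ((Tq s(i,j) : Finset V) : Set V))
          (GB := (Subdiv.G M).induce {v | C v = i ∨ C v = j})
          ⟨fun x => ⟨Sum.inl x.1, hmemb x⟩, ?_⟩ ?_ hac
        · intro x y hxy
          have h1 : M.support.Adj x.1 y.1 := hxy
          exact h1
        · intro x y hxy
          have h2 : (Sum.inl x.1 : V ⊕ Subdiv.X M) = Sum.inl y.1 := congrArg Subtype.val hxy
          exact Subtype.ext (Sum.inl.inj h2)
  -- counting
  have hcard1 : ∀ q, (Sq q).card ≤ (Tq q).card + (Bq q).card := by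
    intro q
    calc (Sq q).card ≤ (Sq q \ (Bq q).image pick).card + ((Bq q).image pick).card :=
          Finset.card_le_card_sdiff_add_card
    _ ≤ (Tq q).card + (Bq q).card := by
        rw [hTq]
        exact Nat.add_le_add_left (Finset.card_image_le) _
  have hsum1 : ∑ q ∈ PC, (Sq q).card = 4 * Fintype.card V := by
    have h1 : ∀ q, (Sq q).card = ∑ v : V, if c v ∈ q then 1 else 0 := by
      intro q
      rw [hSq]
      exact Finset.card_filter _ _
    calc ∑ q ∈ PC, (Sq q).card = ∑ q ∈ PC, ∑ v : V, (if c v ∈ q then 1 else 0) :=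
          Finset.sum_congr rfl (fun q _ => h1 q)
    _ = ∑ v : V, ∑ q ∈ PC, (if c v ∈ q then 1 else 0) := Finset.sum_comm
    _ = ∑ v : V, 4 := by
        refine Finset.sum_congr rfl ?_
        intro v _
        rw [← Finset.card_filter]
        exact hcolor (c v)
    _ = 4 * Fintype.card V := by
        rw [Finset.sum_const, Finset.card_univ, smul_eq_mul, mul_comm]
  have hsum2 : ∑ q ∈ PC, (Bq q).card ≤ P.card := by
    have h1 : ∀ q, (Bq q).card = ∑ p ∈ P, (if (∀ a ∈ p, c a ∈ q) then 1 else 0) := by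
      intro q
      rw [hBq]
      exact Finset.card_filter _ _
    calc ∑ q ∈ PC, (Bq q).card
        = ∑ q ∈ PC, ∑ p ∈ P, (if (∀ a ∈ p, c a ∈ q) then 1 else 0) :=
          Finset.sum_congr rfl (fun q _ => h1 q)
    _ = ∑ p ∈ P, ∑ q ∈ PC, (if (∀ a ∈ p, c a ∈ q) then 1 else 0) := Finset.sum_comm
    _ ≤ ∑ p ∈ P, 1 := by
        refine Finset.sum_le_sum ?_
        intro p hp
        rw [← Finset.card_filter]
        obtain ⟨u, v, rfl, hm⟩ := (Finset.mem_filter.mp (hPdef ▸ hp)).2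
        have hadj : (Subdiv.G M).Adj (Sum.inl u) (Sum.inl v) := by
          show 0 < M.mult u v
          omega
        have hne : c u ≠ c v := hprop _ _ hadj
        have hsub : (PC.filter (fun q => ∀ a ∈ s(u,v), c a ∈ q)) ⊆ {s(c u, c v)} := by
          intro q hq
          have h2 := Finset.mem_filter.mp hq
          have h3 : c u ∈ q := h2.2 u (Sym2.mem_mk_left u v)
          have h4 : c v ∈ q := h2.2 v (Sym2.mem_mk_right u v)
          rw [Finset.mem_singleton]
          exact sym2_eq_of_mem hne h3 h4
        calc (PC.filter (fun q => ∀ a ∈ s(u,v), c a ∈ q)).card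
            ≤ ({s(c u, c v)} : Finset (Sym2 (Fin 5))).card := Finset.card_le_card hsub
        _ = 1 := Finset.card_singleton _
    _ = P.card := by rw [Finset.sum_const, smul_eq_mul, mul_one]
  have hmain : 4 * Fintype.card V ≤ (∑ q ∈ PC, (Tq q).card) + P.card := by
    calc 4 * Fintype.card V = ∑ q ∈ PC, (Sq q).card := hsum1.symm
    _ ≤ ∑ q ∈ PC, ((Tq q).card + (Bq q).card) := Finset.sum_le_sum (fun q _ => hcard1 q)
    _ = (∑ q ∈ PC, (Tq q).card) + ∑ q ∈ PC, (Bq q).card := Finset.sum_add_distrib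
    _ ≤ _ := Nat.add_le_add_left hsum2 _
  -- extract a good q
  have hPCne : PC.Nonempty := Finset.card_pos.mp (by omega)
  have hconst : ∑ _q ∈ PC, ((4 * Fintype.card V - P.card : ℚ) / 10)
      = (4 * Fintype.card V - P.card : ℚ) := by
    rw [Finset.sum_const, hPC10]
    push_cast
    ring
  have hcast : ∑ q ∈ PC, ((Tq q).card : ℚ) ≥ (4 * Fintype.card V - P.card : ℚ) := by
    have h2 : ((4 * Fintype.card V : ℕ) : ℚ) ≤ (((∑ q ∈ PC, (Tq q).card) + P.card : ℕ) : ℚ) := by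
      exact_mod_cast hmain
    push_cast at h2
    linarith
  have hex : ∃ q ∈ PC, ((4 * Fintype.card V - P.card : ℚ) / 10) ≤ ((Tq q).card : ℚ) := by
    apply Finset.exists_le_of_sum_le hPCne
    rw [hconst]
    exact hcast
  obtain ⟨q, -, hq⟩ := hex
  -- conclude via forestNum
  have hbdd : BddAbove {k | ∃ S : Finset V, M.IsInducedForest S ∧ S.card = k} := by
    refine ⟨Fintype.card V, ?_⟩
    rintro k ⟨S, -, rfl⟩
    exact Finset.card_le_univ S
  have hmem : (Tq q).card ∈ {k | ∃ S : Finset V, M.IsInducedForest S ∧ S.card = k} :=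
    ⟨Tq q, hforest q, rfl⟩
  have hle : (Tq q).card ≤ M.forestNum := le_csSup hbdd hmem
  have hleQ : ((Tq q).card : ℚ) ≤ (M.forestNum : ℚ) := by exact_mod_cast hle
  have hNatV : ((Nat.card V : ℕ) : ℚ) = (Fintype.card V : ℚ) := by
    rw [Nat.card_eq_fintype_card]
  rw [hNatV, hPcard]
  have heq : (2/5 : ℚ) * (Fintype.card V : ℚ) - (P.card : ℚ)/10
      = (4 * Fintype.card V - P.card : ℚ)/10 := by ring
  rw [heq]
  linarith

end MainProof

/-- if every simple planar graph admits an acyclic proper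
`5`-coloring, then every planar multigraph `M` on `n` vertices with `k` parallel
pairs satisfies `a(M) ≥ (2/5) n - k / 10`. -/
theorem forestNum_ge_of_acyclic_coloring
    (h5 : ∀ (W : Type) [Fintype W] (G : SimpleGraph W), G.toMultigraph.IsPlanar →
      ∃ C : W → Fin 5, (∀ u v, G.Adj u v → C u ≠ C v) ∧
        ∀ i j : Fin 5, (G.induce {v | C v = i ∨ C v = j}).IsAcyclic)
    {V : Type} [Fintype V] (M : Multigraph V) (hM : M.IsPlanar) :
    (2 / 5 : ℚ) * Nat.card V - (M.parallelPairs : ℚ) / 10 ≤ M.forestNum :=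
  forestNum_ge_of_acyclic_coloring' h5 M hM
end

section
/- Every planar multigraph M on n ≥ 1 vertices admitting a plane embedding without 2-faces satisfies a(M) ≥ n/4 + 3/10. -/
open Finset

/-- Arithmetic core: `k(k+1)(12-2k+s) ≤ 24(k+s)` for integers `1 ≤ k`, `0 ≤ s ≤ k`. -/
lemma arith_core (k s : ℚ) (hk1 : 1 ≤ k) (hs0 : 0 ≤ s) (hsk : s ≤ k)
    (hint : 0 ≤ (k - 2) * (k - 3)) :
    k * (k + 1) * (12 - 2 * k + s) ≤ 24 * (k + s) := by
  nlinarith [mul_nonneg (mul_nonneg (sub_nonneg.2 hsk) (by linarith : (0:ℚ) ≤ k)) hint,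
    mul_nonneg (mul_nonneg hs0 (by linarith : (0:ℚ) ≤ k)) (by nlinarith [sq_nonneg (2*k - 11)] : (0:ℚ) ≤ k*k - 11*k + 36),
    sq_nonneg (k - s)]

lemma nat_gap (k : ℕ) : 0 ≤ ((k:ℚ) - 2) * ((k:ℚ) - 3) := by
  rcases Nat.lt_or_ge k 3 with h | h
  · have : (k:ℚ) ≤ 2 := by exact_mod_cast Nat.lt_succ_iff.mp h
    nlinarith
  · have : (3:ℚ) ≤ k := by exact_mod_cast h
    nlinarith

/-- Helper: a cycle through a vertex maximal in an order gives two distinct smaller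
neighbors. -/
lemma no_cycle_at_max {W : Type} (G : SimpleGraph W) (r : W → ℕ) (hr : Function.Injective r)
    (h : ∀ w a b, G.Adj w a → G.Adj w b → r a < r w → r b < r w → a = b) :
    ∀ (w : W) (c : G.Walk w w), c.IsCycle → (∀ u ∈ c.support, r u ≤ r w) → False := by
  intro w c hc hmax
  cases c with
  | nil => exact SimpleGraph.Walk.IsCycle.not_of_nil hc
  | cons h1 q =>
    rename_i x
    have hxw : x ≠ w := h1.ne'
    have hnodup : (SimpleGraph.Walk.cons h1 q).edges.Nodup := hc.isTrail.edges_nodup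
    rw [SimpleGraph.Walk.edges_cons] at hnodup
    have hnotmem : s(w, x) ∉ q.edges := (List.nodup_cons.mp hnodup).1
    -- decompose the reverse of q
    cases hq : q.reverse with
    | nil =>
      exact hxw (by simpa using congrArg SimpleGraph.Walk.length hq)
    | cons h2 q2 =>
      rename_i y
      -- h2 : G.Adj w y
      have hyw : y ≠ w := h2.ne'
      have hyq : y ∈ q.support := by
        have hmem : y ∈ q.reverse.support := by
          rw [hq, SimpleGraph.Walk.support_cons]
          exact List.mem_cons_of_mem _ (SimpleGraph.Walk.start_mem_support q2)
        rwa [SimpleGraph.Walk.support_reverse, List.mem_reverse] at hmem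
      have hxq : x ∈ q.support := SimpleGraph.Walk.start_mem_support q
      have hxlt : r x < r w := by
        have := hmax x (by rw [SimpleGraph.Walk.support_cons]; exact List.mem_cons_of_mem _ hxq)
        exact lt_of_le_of_ne this (fun e => hxw (hr e))
      have hylt : r y < r w := by
        have := hmax y (by rw [SimpleGraph.Walk.support_cons]; exact List.mem_cons_of_mem _ hyq)
        exact lt_of_le_of_ne this (fun e => hyw (hr e))
      have hxy : x = y := h w x y h1 h2 hxlt hylt
      -- edges: s(w,y) is the last edge of q
      have hedges : q.edges = q2.edges.reverse ++ [s(w, y)] := by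
        have h3 : q.reverse.edges = s(w, y) :: q2.edges := by rw [hq, SimpleGraph.Walk.edges_cons]
        rw [SimpleGraph.Walk.edges_reverse] at h3
        have := congrArg List.reverse h3
        simpa using this
      subst hxy
      apply hnotmem
      rw [hedges]
      simp

/-- If every vertex has at most one neighbor with smaller `r`-value (`r` injective),
the graph is acyclic. -/
lemma acyclic_of_unique_smaller {W : Type} (G : SimpleGraph W) (r : W → ℕ)
    (hr : Function.Injective r)
    (h : ∀ w a b, G.Adj w a → G.Adj w b → r a < r w → r b < r w → a = b) :
    G.IsAcyclic := by
  classical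
  intro v c hc
  obtain ⟨w, hw, hmax⟩ := c.support.toFinset.exists_max_image r ⟨v, by simp⟩
  rw [List.mem_toFinset] at hw
  have hc' := hc.rotate hw
  apply no_cycle_at_max G r hr h w (c.rotate w hw) hc'
  intro u hu
  apply hmax
  rw [List.mem_toFinset]
  -- u ∈ (c.rotate hw).support → u ∈ c.support
  rw [SimpleGraph.Walk.support_eq_cons] at hu
  rcases List.mem_cons.mp hu with rfl | hu
  · exact hw
  · have hrot := SimpleGraph.Walk.support_rotate c w hw
    have : u ∈ c.support.tail := (hrot.mem_iff).mp hu
    exact List.mem_of_mem_tail this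


open Finset

section Count

variable {V : Type} [Fintype V] [DecidableEq V]

/-- Bijections that put `a` first among `A`. -/
def MinAt (A : Finset V) (a : V) : Finset (V ≃ Fin (Fintype.card V)) :=
  univ.filter fun f => ∀ u ∈ A, u ≠ a → f a < f u

/-- Bijections that put `x` first and `y` second among `A`. -/
def PairAt (A : Finset V) (x y : V) : Finset (V ≃ Fin (Fintype.card V)) :=
  univ.filter fun f => f x < f y ∧ ∀ u ∈ A, u ≠ x → u ≠ y → f y < f u

lemma swap_preserves {A : Finset V} {a b : V} (ha : a ∈ A) (hb : b ∈ A) (u : V) :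
    Equiv.swap a b u ∈ A ↔ u ∈ A := by
  rcases eq_or_ne u a with rfl | h1
  · simp [Equiv.swap_apply_left, ha, hb]
  rcases eq_or_ne u b with rfl | h2
  · simp [Equiv.swap_apply_right, ha, hb]
  rw [Equiv.swap_apply_of_ne_of_ne h1 h2]

lemma pairAt_perm (A : Finset V) (σ : Equiv.Perm V) (hσ : ∀ u, σ u ∈ A ↔ u ∈ A) (x y : V) :
    (PairAt A (σ x) (σ y)).card = (PairAt A x y).card := by
  apply Finset.card_bij' (fun f _ => σ.trans f) (fun g _ => σ.symm.trans g)
  · intro f hf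
    rw [PairAt, mem_filter] at hf ⊢
    obtain ⟨-, h1, h2⟩ := hf
    refine ⟨mem_univ _, h1, fun u hu hux huy => ?_⟩
    exact h2 (σ u) ((hσ u).2 hu) (fun e => hux (σ.injective e)) (fun e => huy (σ.injective e))
  · intro g hg
    rw [PairAt, mem_filter] at hg ⊢
    obtain ⟨-, h1, h2⟩ := hg
    refine ⟨mem_univ _, by simpa using h1, fun u hu hux huy => ?_⟩
    have hmem : σ.symm u ∈ A := by rw [← hσ (σ.symm u)]; simpa using hu
    have e1 : σ.symm u ≠ x := fun e => hux (by rw [← e]; simp)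
    have e2 : σ.symm u ≠ y := fun e => huy (by rw [← e]; simp)
    simpa using h2 (σ.symm u) hmem e1 e2
  · intro f _; ext u; simp
  · intro g _; ext u; simp

lemma minAt_perm (A : Finset V) (σ : Equiv.Perm V) (hσ : ∀ u, σ u ∈ A ↔ u ∈ A) (a : V) :
    (MinAt A (σ a)).card = (MinAt A a).card := by
  apply Finset.card_bij' (fun f _ => σ.trans f) (fun g _ => σ.symm.trans g)
  · intro f hf
    rw [MinAt, mem_filter] at hf ⊢
    obtain ⟨-, h1⟩ := hf
    exact ⟨mem_univ _, fun u hu hua => h1 (σ u) ((hσ u).2 hu) (fun e => hua (σ.injective e))⟩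
  · intro g hg
    rw [MinAt, mem_filter] at hg ⊢
    obtain ⟨-, h1⟩ := hg
    refine ⟨mem_univ _, fun u hu hua => ?_⟩
    have hmem : σ.symm u ∈ A := by rw [← hσ (σ.symm u)]; simpa using hu
    have e1 : σ.symm u ≠ a := fun e => hua (by rw [← e]; simp)
    simpa using h1 (σ.symm u) hmem e1
  · intro f _; ext u; simp
  · intro g _; ext u; simp

lemma exists_perm_pair (A : Finset V) {x y x' y' : V} (hx : x ∈ A) (hy : y ∈ A)
    (hx' : x' ∈ A) (hy' : y' ∈ A) (hxy : x ≠ y) (hx'y' : x' ≠ y') :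
    ∃ σ : Equiv.Perm V, (∀ u, σ u ∈ A ↔ u ∈ A) ∧ σ x = x' ∧ σ y = y' := by
  set b := Equiv.swap x x' y with hb
  refine ⟨(Equiv.swap x x').trans (Equiv.swap b y'), ?_, ?_, ?_⟩
  · intro u
    have hbA : b ∈ A ↔ y ∈ A := swap_preserves hx hx' y
    rw [Equiv.trans_apply, swap_preserves (hbA.2 hy) hy', swap_preserves hx hx']
  · have h1 : Equiv.swap x x' x = x' := Equiv.swap_apply_left x x'
    have hne1 : x' ≠ b :=
      fun e => hxy (Equiv.injective (Equiv.swap x x') (h1.trans (e.trans hb)))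
    rw [Equiv.trans_apply, h1]
    exact Equiv.swap_apply_of_ne_of_ne hne1 hx'y'
  · rw [Equiv.trans_apply, ← hb, Equiv.swap_apply_left]


lemma minAt_partition (A : Finset V) (hA : A.Nonempty) :
    ∑ a ∈ A, (MinAt A a).card = Fintype.card (V ≃ Fin (Fintype.card V)) := by
  have hdisj : ∀ a ∈ A, ∀ b ∈ A, a ≠ b → Disjoint (MinAt A a) (MinAt A b) := by
    intro a ha b hb hab
    rw [Finset.disjoint_left]
    intro f hfa hfb
    have h1 := (mem_filter.mp hfa).2 b hb (Ne.symm hab)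
    have h2 := (mem_filter.mp hfb).2 a ha hab
    exact absurd h2 (asymm h1)
  have hcover : (univ : Finset (V ≃ Fin (Fintype.card V))) = A.biUnion (fun a => MinAt A a) := by
    ext f
    simp only [mem_biUnion, mem_univ, true_iff]
    obtain ⟨a, ha, hmin⟩ := A.exists_min_image (fun u => f u) hA
    refine ⟨a, ha, mem_filter.2 ⟨mem_univ _, fun u hu hne => ?_⟩⟩
    exact lt_of_le_of_ne (hmin u hu) (fun e => hne (f.injective e.symm))
  rw [← Finset.card_biUnion hdisj, ← hcover, Finset.card_univ]

lemma pair_unique {A : Finset V} {x y x' y' : V} (hx : x ∈ A) (hy : y ∈ A) (hyx : y ≠ x)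
    (hx' : x' ∈ A) (hy' : y' ∈ A) (hy'x' : y' ≠ x') {f : V ≃ Fin (Fintype.card V)}
    (h1 : f ∈ PairAt A x y) (h2 : f ∈ PairAt A x' y') : x = x' ∧ y = y' := by
  obtain ⟨-, hlt1, hmin1⟩ := mem_filter.mp h1
  obtain ⟨-, hlt2, hmin2⟩ := mem_filter.mp h2
  by_cases hyy : y = y'
  · subst hyy
    refine ⟨?_, rfl⟩
    by_contra hxx
    have := hmin1 x' hx' (Ne.symm hxx) hy'x'.symm
    exact absurd hlt2 (asymm this)
  · exfalso
    by_cases hxy' : x = y'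
    · subst hxy'
      by_cases hx'y : x' = y
      · subst hx'y
        exact absurd hlt1 (asymm hlt2)
      · have hx'x : x' ≠ x := fun e => hy'x' e.symm
        have := hmin1 x' hx' hx'x hx'y
        exact absurd (hlt2.trans hlt1) (asymm this)
    · have hy'ne : y' ≠ x := fun e => hxy' e.symm
      have hstep := hmin1 y' hy' hy'ne (Ne.symm hyy)
      by_cases hyx' : y = x'
      · have hxx' : x ≠ x' := fun e => hyx (hyx'.trans e.symm)
        have := hmin2 x hx hxx' hxy'
        exact absurd ((hlt1.trans hstep)) (asymm this)
      · have := hmin2 y hy hyx' hyy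
        exact absurd hstep (asymm this)

lemma pairAt_partition (A : Finset V) (hA : 2 ≤ A.card) :
    ∑ x ∈ A, ∑ y ∈ A.erase x, (PairAt A x y).card
      = Fintype.card (V ≃ Fin (Fintype.card V)) := by
  have inner_disj : ∀ x ∈ A, ∀ y ∈ A.erase x, ∀ y' ∈ A.erase x, y ≠ y' →
      Disjoint (PairAt A x y) (PairAt A x y') := by
    intro x hx y hy y' hy' hne
    rw [Finset.disjoint_left]
    intro f hf hf'
    exact hne (pair_unique hx (mem_of_mem_erase hy) (ne_of_mem_erase hy) hx
      (mem_of_mem_erase hy') (ne_of_mem_erase hy') hf hf').2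
  have outer_disj : ∀ x ∈ A, ∀ x' ∈ A, x ≠ x' →
      Disjoint ((A.erase x).biUnion (fun y => PairAt A x y))
        ((A.erase x').biUnion (fun y => PairAt A x' y)) := by
    intro x hx x' hx' hne
    rw [Finset.disjoint_left]
    intro f hf hf'
    obtain ⟨y, hy, hfy⟩ := mem_biUnion.mp hf
    obtain ⟨y', hy', hfy'⟩ := mem_biUnion.mp hf'
    exact hne (pair_unique hx (mem_of_mem_erase hy) (ne_of_mem_erase hy) hx'
      (mem_of_mem_erase hy') (ne_of_mem_erase hy') hfy hfy').1
  have hcover : (univ : Finset (V ≃ Fin (Fintype.card V)))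
      = A.biUnion (fun x => (A.erase x).biUnion (fun y => PairAt A x y)) := by
    ext f
    simp only [mem_biUnion, mem_univ, true_iff]
    have hA1 : A.Nonempty := Finset.card_pos.mp (by omega)
    obtain ⟨x, hx, hminx⟩ := A.exists_min_image (fun u => f u) hA1
    have hAe : (A.erase x).Nonempty := by
      rw [← Finset.card_pos, Finset.card_erase_of_mem hx]; omega
    obtain ⟨y, hy, hminy⟩ := (A.erase x).exists_min_image (fun u => f u) hAe
    refine ⟨x, hx, y, hy, mem_filter.2 ⟨mem_univ _, ?_, ?_⟩⟩
    · exact lt_of_le_of_ne (hminx y (mem_of_mem_erase hy))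
        (fun e => (ne_of_mem_erase hy) (f.injective e.symm))
    · intro u hu hux huy
      exact lt_of_le_of_ne (hminy u (Finset.mem_erase.2 ⟨hux, hu⟩))
        (fun e => huy (f.injective e.symm))
  rw [Finset.sum_congr rfl (fun x hx => (Finset.card_biUnion (inner_disj x hx)).symm),
    ← Finset.card_biUnion outer_disj, ← hcover, Finset.card_univ]

lemma minAt_count (A : Finset V) {a : V} (ha : a ∈ A) :
    (MinAt A a).card * A.card = Fintype.card (V ≃ Fin (Fintype.card V)) := by
  have hconst : ∀ b ∈ A, (MinAt A b).card = (MinAt A a).card := by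
    intro b hb
    have h := minAt_perm A (Equiv.swap a b) (fun u => swap_preserves ha hb u) a
    rwa [Equiv.swap_apply_left] at h
  have h1 : ∑ b ∈ A, (MinAt A b).card = A.card * (MinAt A a).card := by
    rw [Finset.sum_congr rfl hconst, Finset.sum_const, smul_eq_mul]
  rw [← minAt_partition A ⟨a, ha⟩, h1, mul_comm]

lemma pairAt_count (A : Finset V) {x y : V} (hx : x ∈ A) (hy : y ∈ A) (hxy : x ≠ y)
    (hA : 2 ≤ A.card) :
    (PairAt A x y).card * (A.card * (A.card - 1))
      = Fintype.card (V ≃ Fin (Fintype.card V)) := by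
  have hterm : ∀ x' ∈ A, ∀ y' ∈ A.erase x', (PairAt A x' y').card = (PairAt A x y).card := by
    intro x' hx' y' hy'
    obtain ⟨σ, hσ, hσ1, hσ2⟩ := exists_perm_pair A hx hy hx' (mem_of_mem_erase hy') hxy
      (Ne.symm (ne_of_mem_erase hy'))
    rw [← hσ1, ← hσ2, pairAt_perm A σ hσ]
  have h2 : ∑ x' ∈ A, ∑ y' ∈ A.erase x', (PairAt A x' y').card
      = A.card * ((A.card - 1) * (PairAt A x y).card) := by
    have hx'eq : ∀ x' ∈ A, ∑ y' ∈ A.erase x', (PairAt A x' y').card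
        = (A.card - 1) * (PairAt A x y).card := by
      intro x' hx'
      rw [Finset.sum_congr rfl (fun y' hy' => hterm x' hx' y' hy'), Finset.sum_const,
        smul_eq_mul, Finset.card_erase_of_mem hx']
    rw [Finset.sum_congr rfl hx'eq, Finset.sum_const, smul_eq_mul]
  rw [← pairAt_partition A hA, h2]
  ring

end Count
section Stage3

open Finset

variable {V : Type} [Fintype V] [DecidableEq V]

/-- Number of darts from `v` to earlier vertices in the order `f`. -/
def DDcount (M : Multigraph V) (f : V ≃ Fin (Fintype.card V)) (v : V) : ℕ :=
  ∑ u, if f u < f v then M.mult v u else 0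

def GoodAt (M : Multigraph V) (v : V) : Finset (V ≃ Fin (Fintype.card V)) :=
  univ.filter fun f => DDcount M f v ≤ 1

lemma goodAt_count (M : Multigraph V) (v : V) :
    (Fintype.card (V ≃ Fin (Fintype.card V)) : ℚ) * (12 - ∑ u, (M.mult v u : ℚ))
      ≤ 24 * ((GoodAt M v).card : ℚ) := by
  set N := Fintype.card (V ≃ Fin (Fintype.card V)) with hNdef
  set Nb := univ.filter (fun u => 0 < M.mult v u) with hNbdef
  set k := Nb.card with hkdef
  have hNbmem : ∀ u, u ∈ Nb ↔ 0 < M.mult v u := by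
    intro u; rw [hNbdef, mem_filter]; simp
  have hNbne : ∀ u ∈ Nb, u ≠ v := by
    intro u hu e
    rw [hNbmem] at hu
    rw [e, M.loopless] at hu
    exact lt_irrefl 0 hu
  by_cases hk : k = 0
  · have hNb0 : ∀ u, M.mult v u = 0 := by
      intro u
      by_contra h
      have : u ∈ Nb := (hNbmem u).2 (Nat.pos_of_ne_zero h)
      rw [Finset.card_eq_zero.mp hk] at this
      exact absurd this (Finset.notMem_empty u)
    have hd : (∑ u, (M.mult v u : ℚ)) = 0 := by
      apply Finset.sum_eq_zero; intro u _; rw [hNb0 u]; norm_num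
    have hGood : GoodAt M v = univ := by
      ext f
      simp only [GoodAt, mem_filter, mem_univ, true_and, iff_true]
      have : DDcount M f v = 0 := by
        apply Finset.sum_eq_zero; intro u _; rw [hNb0 u]; simp
      omega
    rw [hd, hGood, Finset.card_univ]
    have : (0:ℚ) ≤ (N:ℚ) := by positivity
    nlinarith
  · -- k ≥ 1
    have hk1 : 1 ≤ k := Nat.pos_of_ne_zero hk
    set A := insert v Nb with hAdef
    have hvNb : v ∉ Nb := fun h => (hNbne v h) rfl
    have hAcard : A.card = k + 1 := by rw [hAdef, card_insert_of_notMem hvNb]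
    have hvA : v ∈ A := mem_insert_self v Nb
    have hminc : (MinAt A v).card * (k+1) = N := by rw [← hAcard]; exact minAt_count A hvA
    set T := Nb.filter (fun x => M.mult v x = 1) with hTdef
    set s := T.card with hsdef
    have hsk : s ≤ k := Finset.card_le_card (filter_subset _ _)
    have hsubMin : MinAt A v ⊆ GoodAt M v := by
      intro f hf
      obtain ⟨-, hmin⟩ := mem_filter.mp hf
      refine mem_filter.2 ⟨mem_univ _, ?_⟩
      have hz : DDcount M f v = 0 := by
        apply Finset.sum_eq_zero
        intro u _
        by_cases hm : 0 < M.mult v u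
        · have huNb : u ∈ Nb := (hNbmem u).2 hm
          have := hmin u (mem_insert_of_mem huNb) (hNbne u huNb)
          rw [if_neg (asymm this)]
        · rw [Nat.not_lt, Nat.le_zero] at hm; simp [hm]
      omega
    have hsubPair : ∀ x ∈ T, PairAt A x v ⊆ GoodAt M v := by
      intro x hxT f hf
      obtain ⟨hxNb, hx1⟩ := mem_filter.mp hxT
      obtain ⟨-, hlt, hmin⟩ := mem_filter.mp hf
      refine mem_filter.2 ⟨mem_univ _, ?_⟩
      have hb : DDcount M f v ≤ ∑ u, if u = x then M.mult v u else 0 := by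
        apply Finset.sum_le_sum
        intro u _
        by_cases hux : u = x
        · subst hux; split_ifs <;> simp_all
        · by_cases hm : 0 < M.mult v u
          · have huNb : u ∈ Nb := (hNbmem u).2 hm
            have := hmin u (mem_insert_of_mem huNb) hux (hNbne u huNb)
            rw [if_neg (asymm this), if_neg hux]
          · rw [Nat.not_lt, Nat.le_zero] at hm; simp [hm]
      have he : (∑ u, if u = x then M.mult v u else 0) = M.mult v x := by
        rw [Finset.sum_ite_eq' univ x (fun u => M.mult v u)]
        simp
      omega
    have hdisj1 : ∀ x ∈ T, Disjoint (MinAt A v) (PairAt A x v) := by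
      intro x hxT
      obtain ⟨hxNb, -⟩ := mem_filter.mp hxT
      rw [Finset.disjoint_left]
      intro f hf1 hf2
      have h1 := (mem_filter.mp hf1).2 x (mem_insert_of_mem hxNb) (hNbne x hxNb)
      have h2 := (mem_filter.mp hf2).2.1
      exact absurd h2 (asymm h1)
    have hdisj2 : ∀ x ∈ T, ∀ x' ∈ T, x ≠ x' → Disjoint (PairAt A x v) (PairAt A x' v) := by
      intro x hx x' hx' hne
      obtain ⟨hxNb, -⟩ := mem_filter.mp hx
      obtain ⟨hx'Nb, -⟩ := mem_filter.mp hx'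
      rw [Finset.disjoint_left]
      intro f hf hf'
      exact hne (pair_unique (mem_insert_of_mem hxNb) hvA
        (Ne.symm (hNbne x hxNb)).symm.symm (mem_insert_of_mem hx'Nb) hvA
        (Ne.symm (hNbne x' hx'Nb)).symm.symm hf hf').1
    have hUnion : ((MinAt A v) ∪ T.biUnion (fun x => PairAt A x v)).card
        = (MinAt A v).card + ∑ x ∈ T, (PairAt A x v).card := by
      rw [Finset.card_union_of_disjoint (Finset.disjoint_biUnion_right _ _ _ |>.2 hdisj1),
        Finset.card_biUnion hdisj2]
    have hGoodGe : (MinAt A v).card + ∑ x ∈ T, (PairAt A x v).card ≤ (GoodAt M v).card := by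
      rw [← hUnion]
      apply Finset.card_le_card
      apply Finset.union_subset hsubMin (Finset.biUnion_subset.2 hsubPair)
    have hA2 : 2 ≤ A.card := by omega
    have hpairc : ∀ x ∈ T, (PairAt A x v).card * ((k+1) * k) = N := by
      intro x hxT
      obtain ⟨hxNb, -⟩ := mem_filter.mp hxT
      have h := pairAt_count A (mem_insert_of_mem hxNb) hvA (hNbne x hxNb) hA2
      rw [hAcard] at h
      simpa [hNdef] using h
    have hdeg : 2 * k ≤ (∑ u, M.mult v u) + s := by
      have h1 : ∑ u ∈ Nb, M.mult v u ≤ ∑ u, M.mult v u :=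
        Finset.sum_le_sum_of_subset (subset_univ Nb)
      have h2 : ∑ u ∈ Nb, (if M.mult v u = 1 then 1 else 2) ≤ ∑ u ∈ Nb, M.mult v u := by
        apply Finset.sum_le_sum
        intro u hu
        have := (hNbmem u).1 hu
        split_ifs with h <;> omega
      have h3 : ∑ u ∈ Nb, (if M.mult v u = 1 then 1 else 2)
          = s * 1 + (Nb.filter (fun u => ¬ M.mult v u = 1)).card * 2 := by
        rw [← Finset.sum_filter_add_sum_filter_not Nb (fun u => M.mult v u = 1)]
        rw [Finset.sum_congr rfl (fun u hu => if_pos (mem_filter.mp hu).2),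
          Finset.sum_congr rfl (fun u (hu : u ∈ Nb.filter _) => if_neg (mem_filter.mp hu).2),
          Finset.sum_const, Finset.sum_const, smul_eq_mul, smul_eq_mul]
      have h4 : s + (Nb.filter (fun u => ¬ M.mult v u = 1)).card = k :=
        Finset.card_filter_add_card_filter_not _
      omega
    -- rational arithmetic
    set K : ℚ := (k : ℚ) with hKdef
    set S : ℚ := (s : ℚ) with hSdef
    have hKpos : (0:ℚ) < K := by rw [hKdef]; exact_mod_cast hk1
    have hK1pos : (0:ℚ) < K + 1 := by linarith
    have hNnn : (0:ℚ) ≤ (N:ℚ) := by positivity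
    set c1 : ℚ := ((MinAt A v).card : ℚ) with hc1def
    set P : ℚ := (∑ x ∈ T, ((PairAt A x v).card : ℚ)) with hPdef
    have hminQ : c1 * (K + 1) = N := by
      rw [hc1def, hKdef]
      exact_mod_cast hminc
    have hsumQ : P * ((K+1) * K) = S * N := by
      rw [hPdef, Finset.sum_mul]
      rw [Finset.sum_congr rfl (fun x hx => by
        rw [hKdef]; exact_mod_cast hpairc x hx : ∀ x ∈ T, ((PairAt A x v).card : ℚ) * ((K+1)*K) = (N:ℚ))]
      rw [Finset.sum_const, nsmul_eq_mul, hSdef, hsdef]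
    have hGoodQ : c1 + P ≤ ((GoodAt M v).card : ℚ) := by
      rw [hc1def, hPdef]
      push_cast
      exact_mod_cast hGoodGe
    have hdegQ : 2 * K ≤ (∑ u, (M.mult v u : ℚ)) + S := by
      rw [hKdef, hSdef]
      push_cast
      exact_mod_cast hdeg
    have hSnn : (0:ℚ) ≤ S := by rw [hSdef]; positivity
    have hSK : S ≤ K := by rw [hSdef, hKdef]; exact_mod_cast hsk
    have hKge1 : (1:ℚ) ≤ K := by rw [hKdef]; exact_mod_cast hk1
    have harith := arith_core K S hKge1 hSnn hSK (by rw [hKdef]; exact nat_gap k)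
    set g : ℚ := ((GoodAt M v).card : ℚ) with hgdef
    have e2 : 24*(K*(K+1))*(c1 + P) ≤ 24*(K*(K+1))*g :=
      mul_le_mul_of_nonneg_left (by linarith [hGoodQ]) (by nlinarith [hKpos, hK1pos])
    have hA1 : (N:ℚ)*(K*(K+1)*(12 - 2*K + S)) ≤ (N:ℚ)*(24*(K+S)) :=
      mul_le_mul_of_nonneg_left harith hNnn
    have e1 : K*(K+1)*((N:ℚ)*(12 - 2*K + S)) ≤ K*(K+1)*(24*g) := by
      nlinarith [hminQ, hsumQ]
    have hKKpos : (0:ℚ) < K*(K+1) := mul_pos hKpos hK1pos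
    have e0 : (N:ℚ)*(12 - 2*K + S) ≤ 24*g := (mul_le_mul_iff_right₀ hKKpos).mp e1
    have efin : (N:ℚ) * (12 - ∑ u, (M.mult v u : ℚ)) ≤ (N:ℚ)*(12 - 2*K + S) := by
      apply mul_le_mul_of_nonneg_left _ hNnn
      linarith
    linarith

lemma forest_of_good (M : Multigraph V) (f : V ≃ Fin (Fintype.card V)) :
    M.IsInducedForest (univ.filter fun v => DDcount M f v ≤ 1) := by
  set Sf := univ.filter fun v => DDcount M f v ≤ 1 with hSf
  have hmem : ∀ v ∈ Sf, DDcount M f v ≤ 1 := fun v hv => (mem_filter.mp hv).2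
  have hpair : ∀ w a b : V, w ∈ Sf → f a < f w → f b < f w → 0 < M.mult w a →
      0 < M.mult w b → a ≠ b → False := by
    intro w a b hw ha hb hma hmb hab
    have h2 : M.mult w a + M.mult w b ≤ DDcount M f w := by
      have hsub : ({a, b} : Finset V) ⊆ univ := subset_univ _
      have := Finset.sum_le_sum_of_subset_of_nonneg hsub
        (fun u _ _ => Nat.zero_le (if f u < f w then M.mult w u else 0))
      rw [Finset.sum_pair hab, if_pos ha, if_pos hb] at this
      exact this
    have := hmem w hw
    omega
  constructor
  · -- no parallel edges inside
    intro u hu w hw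
    by_contra hcon
    have h2 : 2 ≤ M.mult u w := by omega
    have huw : u ≠ w := by
      intro e; rw [e, M.loopless] at h2; omega
    have hfne : f u ≠ f w := fun e => huw (f.injective e)
    rcases lt_or_gt_of_ne hfne with hlt | hlt
    · -- u earlier, w ∈ Sf has 2 darts to u
      have h3 : M.mult w u ≤ DDcount M f w := by
        have := Finset.single_le_sum
          (f := fun x => if f x < f w then M.mult w x else 0)
          (fun x _ => Nat.zero_le _) (mem_univ u)
        simp only [if_pos hlt] at this
        exact this
      have := hmem w hw
      rw [M.symm w u] at h3
      omega
    · have h3 : M.mult u w ≤ DDcount M f u := by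
        have := Finset.single_le_sum
          (f := fun x => if f x < f u then M.mult u x else 0)
          (fun x _ => Nat.zero_le _) (mem_univ w)
        rw [if_pos hlt] at this
        exact this
      have := hmem u hu
      omega
  · -- acyclicity
    apply acyclic_of_unique_smaller _ (fun x => (f x.1).1)
    · intro a b h
      exact Subtype.ext (f.injective (Fin.val_injective h))
    · intro w a b hadj1 hadj2 hra hrb
      by_contra hab
      have hane : a.1 ≠ b.1 := fun e => hab (Subtype.ext e)
      have hwS : w.1 ∈ Sf := by
        have := w.2
        rwa [Finset.mem_coe] at this
      have hm1 : 0 < M.mult w.1 a.1 := hadj1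
      have hm2 : 0 < M.mult w.1 b.1 := hadj2
      exact hpair w.1 a.1 b.1 hwS (by rwa [Fin.lt_def]) (by rwa [Fin.lt_def]) hm1 hm2 hane

lemma partB (M : Multigraph V) :
    ∃ S : Finset V, M.IsInducedForest S ∧
      12 * (Fintype.card V : ℚ) - (∑ v, ∑ u, (M.mult v u : ℚ)) ≤ 24 * (S.card : ℚ) := by
  set n := Fintype.card V with hn
  have hswap : (∑ f : V ≃ Fin n, (((univ.filter fun v => DDcount M f v ≤ 1)).card : ℚ))
      = ∑ v, (((GoodAt M v)).card : ℚ) := by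
    simp only [GoodAt, Finset.card_filter]
    push_cast
    rw [Finset.sum_comm]
  have htot : (Fintype.card (V ≃ Fin n) : ℚ) * (12 * n - ∑ v, ∑ u, (M.mult v u : ℚ))
      ≤ ∑ f : V ≃ Fin n, 24 * (((univ.filter fun v => DDcount M f v ≤ 1)).card : ℚ) := by
    have h1 : ∀ v : V, (Fintype.card (V ≃ Fin n) : ℚ) * (12 - ∑ u, (M.mult v u : ℚ))
        ≤ 24 * ((GoodAt M v).card : ℚ) := fun v => goodAt_count M v
    have h2 := Finset.sum_le_sum (fun v (_ : v ∈ univ) => h1 v)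
    rw [← Finset.mul_sum] at h2
    have h3 : (∑ v : V, (12 - ∑ u, (M.mult v u : ℚ)))
        = 12 * n - ∑ v, ∑ u, (M.mult v u : ℚ) := by
      rw [Finset.sum_sub_distrib, Finset.sum_const, Finset.card_univ, nsmul_eq_mul, hn]
      ring
    rw [h3] at h2
    rw [← Finset.mul_sum, hswap, Finset.mul_sum]
    exact h2
  have hΩne : (univ : Finset (V ≃ Fin n)).Nonempty := ⟨Fintype.equivFin V, mem_univ _⟩
  have hpig := Finset.exists_le_of_sum_le hΩne (f := fun _ : V ≃ Fin n =>
      (12 * (n:ℚ) - ∑ v, ∑ u, (M.mult v u : ℚ)))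
    (g := fun f => 24 * (((univ.filter fun v => DDcount M f v ≤ 1)).card : ℚ)) ?_
  · obtain ⟨f, -, hf⟩ := hpig
    exact ⟨_, forest_of_good M f, hf⟩
  · rw [Finset.sum_const, nsmul_eq_mul, Finset.card_univ]
    exact htot

end Stage3

namespace Multigraph
namespace PlaneEmbedding

open Finset

variable {V : Type} {M : Multigraph V}

lemma outOrbit_inj (E : M.PlaneEmbedding) : Function.Injective E.outOrbit := by
  intro c1 c2 h
  rw [← E.outOrbit_comp c1, ← E.outOrbit_comp c2, h]

/-- Measure for the nesting recursion. -/
noncomputable def ymeasure (E : M.PlaneEmbedding) : (Unit ⊕ M.Faces E.rot) → ℕ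
  | Sum.inl _ => 0
  | Sum.inr F => E.depth (M.faceDartComp E.rot F)

open Classical in
noncomputable def sinkOf (E : M.PlaneEmbedding) (y : Unit ⊕ M.Faces E.rot) :
    Unit ⊕ M.Faces E.rot :=
  if h : ∃ c, y = Sum.inr (E.outOrbit c) then
    match hm : E.encl h.choose with
    | none => Sum.inl ()
    | some F' => sinkOf E (Sum.inr F')
  else y
termination_by E.ymeasure y
decreasing_by
  have hy := h.choose_spec
  rw [hy]
  simp only [ymeasure, E.outOrbit_comp]
  exact E.encl_depth _ _ hm

lemma sinkOf_sink (E : M.PlaneEmbedding) {y : Unit ⊕ M.Faces E.rot}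
    (h : ¬ ∃ c, y = Sum.inr (E.outOrbit c)) : E.sinkOf y = y := by
  rw [sinkOf, dif_neg h]

lemma sinkOf_none (E : M.PlaneEmbedding) (c : M.DartComp) (hm : E.encl c = none) :
    E.sinkOf (Sum.inr (E.outOrbit c)) = Sum.inl () := by
  have hex : ∃ c', (Sum.inr (E.outOrbit c) : Unit ⊕ M.Faces E.rot)
      = Sum.inr (E.outOrbit c') := ⟨c, rfl⟩
  rw [sinkOf, dif_pos hex]
  have hc : hex.choose = c := E.outOrbit_inj (Sum.inr.inj hex.choose_spec).symm
  split
  · rfl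
  · rename_i F' hm'
    rw [hc, hm] at hm'
    exact absurd hm' (by simp)

lemma sinkOf_some (E : M.PlaneEmbedding) (c : M.DartComp) (F : M.Faces E.rot)
    (hm : E.encl c = some F) :
    E.sinkOf (Sum.inr (E.outOrbit c)) = E.sinkOf (Sum.inr F) := by
  have hex : ∃ c', (Sum.inr (E.outOrbit c) : Unit ⊕ M.Faces E.rot)
      = Sum.inr (E.outOrbit c') := ⟨c, rfl⟩
  rw [sinkOf, dif_pos hex]
  have hc : hex.choose = c := E.outOrbit_inj (Sum.inr.inj hex.choose_spec).symm
  split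
  · rename_i hm'
    rw [hc, hm] at hm'
    exact absurd hm' (by simp)
  · rename_i F' hm'
    rw [hc, hm] at hm'
    rw [Option.some.inj hm']

lemma sinkOf_isSink (E : M.PlaneEmbedding) (y : Unit ⊕ M.Faces E.rot) :
    ¬ ∃ c, E.sinkOf y = Sum.inr (E.outOrbit c) := by
  suffices H : ∀ n y, E.ymeasure y ≤ n → ¬ ∃ c, E.sinkOf y = Sum.inr (E.outOrbit c) from
    H (E.ymeasure y) y le_rfl
  intro n
  induction n with
  | zero =>
    intro y hy
    by_cases h : ∃ c, y = Sum.inr (E.outOrbit c)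
    · obtain ⟨c, rfl⟩ := h
      cases hm : E.encl c with
      | none => rw [sinkOf_none E c hm]; simp
      | some F =>
        exfalso
        have h1 := E.encl_depth c F hm
        simp only [ymeasure, E.outOrbit_comp] at hy
        omega
    · rw [sinkOf_sink E h]; exact h
  | succ n ih =>
    intro y hy
    by_cases h : ∃ c, y = Sum.inr (E.outOrbit c)
    · obtain ⟨c, rfl⟩ := h
      cases hm : E.encl c with
      | none => rw [sinkOf_none E c hm]; simp
      | some F =>
        rw [sinkOf_some E c F hm]
        apply ih
        have h1 := E.encl_depth c F hm
        simp only [ymeasure, E.outOrbit_comp] at hy ⊢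
        omega
    · rw [sinkOf_sink E h]; exact h

lemma sinkOf_merge (E : M.PlaneEmbedding) :
    ∀ x y, E.mergeRel x y → E.sinkOf x = E.sinkOf y := by
  rintro x y ⟨c, rfl, rfl⟩
  cases hm : E.encl c with
  | none =>
    rw [sinkOf_none E c hm]
    have hns : ¬ ∃ c', (Sum.inl () : Unit ⊕ M.Faces E.rot) = Sum.inr (E.outOrbit c') := by simp
    show Sum.inl () = E.sinkOf (Sum.inl ())
    rw [sinkOf_sink E hns]
  | some F =>
    rw [sinkOf_some E c F hm]
    rfl

lemma planeFaces_count [Finite V] (E : M.PlaneEmbedding) :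
    1 + Nat.card (M.Faces E.rot) ≤ Nat.card E.PlaneFaces + Nat.card M.DartComp := by
  classical
  have hFacesFin : Finite (M.Faces E.rot) := M.facesFinite E.rot
  have hYfin : Finite (Unit ⊕ M.Faces E.rot) := inferInstance
  have hPFfin : Finite E.PlaneFaces := Quot.finite _
  -- injection from sinks into plane faces
  have hinj : Function.Injective
      (fun s : {y : Unit ⊕ M.Faces E.rot // ¬ ∃ c, y = Sum.inr (E.outOrbit c)} =>
        Quot.mk E.mergeRel s.1) := by
    intro s1 s2 h
    have h1 : E.sinkOf s1.1 = E.sinkOf s2.1 :=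
      congrArg (Quot.lift E.sinkOf (sinkOf_merge E)) h
    rw [sinkOf_sink E s1.2, sinkOf_sink E s2.2] at h1
    exact Subtype.ext h1
  have h1 : Nat.card {y : Unit ⊕ M.Faces E.rot // ¬ ∃ c, y = Sum.inr (E.outOrbit c)}
      ≤ Nat.card E.PlaneFaces := Nat.card_le_card_of_injective _ hinj
  have h2 : Nat.card {y : Unit ⊕ M.Faces E.rot // ∃ c, y = Sum.inr (E.outOrbit c)}
      = Nat.card M.DartComp := by
    apply Nat.card_congr
    symm
    refine Equiv.ofBijective (fun c => ⟨Sum.inr (E.outOrbit c), c, rfl⟩) ⟨?_, ?_⟩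
    · intro c1 c2 h
      exact E.outOrbit_inj (Sum.inr.inj (Subtype.mk.inj h))
    · rintro ⟨y, c, rfl⟩
      exact ⟨c, rfl⟩
  letI : Fintype (Unit ⊕ M.Faces E.rot) := Fintype.ofFinite _
  have h3 : Nat.card {y : Unit ⊕ M.Faces E.rot // ∃ c, y = Sum.inr (E.outOrbit c)}
      + Nat.card {y : Unit ⊕ M.Faces E.rot // ¬ ∃ c, y = Sum.inr (E.outOrbit c)}
      = Nat.card (Unit ⊕ M.Faces E.rot) := by
    rw [Nat.card_eq_fintype_card, Nat.card_eq_fintype_card, Nat.card_eq_fintype_card,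
      Fintype.card_subtype_compl]
    have := Fintype.card_subtype_le (fun y : Unit ⊕ M.Faces E.rot =>
      ∃ c, y = Sum.inr (E.outOrbit c))
    omega
  have h4 : Nat.card (Unit ⊕ M.Faces E.rot) = 1 + Nat.card (M.Faces E.rot) := by
    rw [Nat.card_sum]
    simp
  omega

lemma darts_bound [Fintype V] (E : M.PlaneEmbedding) (hE : E.NoTwoFaces)
    (hd : Nonempty M.Dart) :
    3 * Nat.card E.PlaneFaces ≤ Nat.card M.Dart := by
  classical
  letI : Fintype M.Dart := Fintype.ofFinite _
  have hPFfin : Finite E.PlaneFaces := Quot.finite _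
  letI : Fintype E.PlaneFaces := Fintype.ofFinite _
  have hcard : (univ : Finset M.Dart).card
      = ∑ Pf : E.PlaneFaces, (univ.filter fun d : M.Dart =>
          Quot.mk E.mergeRel (Sum.inr (Quotient.mk (cycleSetoid (M.facePerm E.rot)) d))
            = Pf).card :=
    Finset.card_eq_sum_card_fiberwise (fun d _ => mem_univ _)
  have hfiber : ∀ Pf : E.PlaneFaces, E.faceDeg Pf = (univ.filter fun d : M.Dart =>
      Quot.mk E.mergeRel (Sum.inr (Quotient.mk (cycleSetoid (M.facePerm E.rot)) d))
        = Pf).card := by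
    intro Pf
    rw [faceDeg, Nat.card_eq_fintype_card, Fintype.card_subtype]
  have hfiber3 : ∀ Pf : E.PlaneFaces, 3 ≤ (univ.filter fun d : M.Dart =>
      Quot.mk E.mergeRel (Sum.inr (Quotient.mk (cycleSetoid (M.facePerm E.rot)) d))
        = Pf).card := by
    intro Pf
    obtain ⟨x, hx⟩ := Quot.exists_rep Pf
    have hne : ∃ d : M.Dart,
        Quot.mk E.mergeRel (Sum.inr (Quotient.mk (cycleSetoid (M.facePerm E.rot)) d))
          = Pf := by
      cases x with
      | inr F =>
        obtain ⟨d, hd2⟩ := Quotient.exists_rep F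
        exact ⟨d, by rw [hd2]; exact hx⟩
      | inl u =>
        have hDCne : Nonempty M.DartComp :=
          ⟨⟨M.support.connectedComponentMk hd.some.1.1, hd.some, rfl⟩⟩
        haveI hCCfin : Finite M.support.ConnectedComponent := Quot.finite _
        haveI hDCfin : Finite M.DartComp := Subtype.finite
        letI : Fintype M.DartComp := Fintype.ofFinite _
        obtain ⟨c₀, -, hmin⟩ := (univ : Finset M.DartComp).exists_min_image E.depth
          ⟨hDCne.some, mem_univ _⟩
        have hnone : E.encl c₀ = none := by
          cases hm : E.encl c₀ with
          | none => rfl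
          | some F =>
            exact absurd (E.encl_depth c₀ F hm) (not_lt.2 (hmin _ (mem_univ _)))
        have hmerge : Quot.mk E.mergeRel (Sum.inr (E.outOrbit c₀))
            = Quot.mk E.mergeRel (Sum.inl ()) := by
          apply Quot.sound
          exact ⟨c₀, rfl, by rw [hnone]; rfl⟩
        obtain ⟨d, hd2⟩ := Quotient.exists_rep (E.outOrbit c₀)
        refine ⟨d, ?_⟩
        rw [hd2, hmerge, ← hx]
    obtain ⟨d₀, hd₀⟩ := hne
    have hneq : M.facePerm E.rot d₀ ≠ d₀ := by
      intro e
      have h11 : (M.facePerm E.rot d₀).1.1 = d₀.1.2 := by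
        show (E.rot (M.revPerm d₀)).1.1 = d₀.1.2
        rw [E.rot_tail]
        rfl
      rw [e] at h11
      have hlt := d₀.2.isLt
      have h0 : M.mult d₀.1.1 d₀.1.2 = 0 := by
        rw [h11]
        exact M.loopless _
      omega
    have hsame : (Quotient.mk (cycleSetoid (M.facePerm E.rot)) (M.facePerm E.rot d₀) :
        M.Faces E.rot) = Quotient.mk (cycleSetoid (M.facePerm E.rot)) d₀ := by
      apply Quot.sound
      have hsc : (M.facePerm E.rot).SameCycle d₀ ((M.facePerm E.rot) d₀) := ⟨1, by simp⟩
      exact hsc.symm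
    have hsub : ({d₀, M.facePerm E.rot d₀} : Finset M.Dart)
        ⊆ univ.filter fun d : M.Dart =>
          Quot.mk E.mergeRel (Sum.inr (Quotient.mk (cycleSetoid (M.facePerm E.rot)) d))
            = Pf := by
      intro d hdm
      rcases Finset.mem_insert.mp hdm with rfl | hdm
      · exact mem_filter.2 ⟨mem_univ _, hd₀⟩
      · rw [Finset.mem_singleton] at hdm
        subst hdm
        refine mem_filter.2 ⟨mem_univ _, ?_⟩
        rw [hsame]
        exact hd₀
    have h2le : 2 ≤ (univ.filter fun d : M.Dart =>
        Quot.mk E.mergeRel (Sum.inr (Quotient.mk (cycleSetoid (M.facePerm E.rot)) d))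
          = Pf).card := by
      have := Finset.card_le_card hsub
      rwa [Finset.card_pair (Ne.symm hneq)] at this
    have hne2 := hE Pf
    rw [hfiber Pf] at hne2
    omega
  have hmain : 3 * Fintype.card E.PlaneFaces ≤ Fintype.card M.Dart := by
    have h30 : (∑ _Pf : E.PlaneFaces, 3) ≤ ∑ Pf : E.PlaneFaces, (univ.filter fun d : M.Dart =>
        Quot.mk E.mergeRel (Sum.inr (Quotient.mk (cycleSetoid (M.facePerm E.rot)) d))
          = Pf).card := Finset.sum_le_sum (fun Pf _ => hfiber3 Pf)
    have hl : (∑ _Pf : E.PlaneFaces, 3) = 3 * Fintype.card E.PlaneFaces := by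
      rw [Finset.sum_const, Finset.card_univ, smul_eq_mul, mul_comm]
    have hr : Fintype.card M.Dart = ∑ Pf : E.PlaneFaces, (univ.filter fun d : M.Dart =>
        Quot.mk E.mergeRel (Sum.inr (Quotient.mk (cycleSetoid (M.facePerm E.rot)) d))
          = Pf).card := hcard
    omega
  rw [Nat.card_eq_fintype_card, Nat.card_eq_fintype_card]
  exact hmain

end PlaneEmbedding
end Multigraph
/-- every planar multigraph on `n ≥ 1` vertices admitting a plane
embedding without `2`-faces satisfies `a(M) ≥ n / 4 + 3 / 10`. -/
theorem forestNum_ge_quarter_add_three_tenths {V : Type} [Fintype V]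
    (M : Multigraph V) (hn : 1 ≤ Nat.card V)
    (E : M.PlaneEmbedding) (hE : E.NoTwoFaces) :
    (Nat.card V : ℚ) / 4 + 3 / 10 ≤ M.forestNum := by
  classical
  obtain ⟨S, hforest, hcard⟩ := partB M
  have hFN : (S.card : ℚ) ≤ (M.forestNum : ℚ) := by
    have hbdd : BddAbove {k | ∃ S : Finset V, M.IsInducedForest S ∧ S.card = k} := by
      refine ⟨Fintype.card V, ?_⟩
      rintro k ⟨S', -, rfl⟩
      simpa using Finset.card_le_univ S'
    have hmem : S.card ∈ {k | ∃ S : Finset V, M.IsInducedForest S ∧ S.card = k} :=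
      ⟨S, hforest, rfl⟩
    have := le_csSup hbdd hmem
    exact_mod_cast this
  have hdartsumN : Nat.card M.Dart = ∑ v, ∑ u, M.mult v u := by
    have e : M.Dart ≃ (Σ p : V × V, Fin (M.mult p.1 p.2)) := Equiv.refl _
    rw [Nat.card_congr e, Nat.card_eq_fintype_card, Fintype.card_sigma]
    simp [Fintype.sum_prod_type]
  have hdartsum : (Nat.card M.Dart : ℚ) = ∑ v, ∑ u, (M.mult v u : ℚ) := by
    rw [hdartsumN]
    push_cast
    rfl
  set n : ℕ := Nat.card V with hnn
  have hnF : (Fintype.card V : ℚ) = (n : ℚ) := by rw [hnn, Nat.card_eq_fintype_card]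
  rw [hnF, ← hdartsum] at hcard
  by_cases hd : Nonempty M.Dart
  · have hA := Multigraph.PlaneEmbedding.darts_bound E hE hd
    have hB := Multigraph.PlaneEmbedding.planeFaces_count E
    have heuler := E.euler
    have hc1 : 1 ≤ M.components := by
      have hv : Nonempty V := by
        have h0 : 0 < Nat.card V := hn
        exact (Nat.card_pos_iff.mp h0).1
      have hne : Nonempty M.support.ConnectedComponent :=
        ⟨M.support.connectedComponentMk hv.some⟩
      haveI : Finite M.support.ConnectedComponent := Quot.finite _
      exact Nat.card_pos
    have hce : M.edgeComponents = Nat.card M.DartComp := rfl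
    have hq : M.edgeCount = Nat.card M.Dart / 2 := rfl
    rw [hq, hce] at heuler
    rw [← hnn] at heuler
    have hkey : Nat.card M.Dart + 9 ≤ 6 * n := by omega
    have hkeyQ : (Nat.card M.Dart : ℚ) + 9 ≤ 6 * (n : ℚ) := by exact_mod_cast hkey
    have hfin : (n : ℚ) / 4 + 3 / 10 ≤ (S.card : ℚ) := by linarith
    linarith
  · have hD0 : Nat.card M.Dart = 0 := by
      haveI : IsEmpty M.Dart := not_nonempty_iff.mp hd
      exact Nat.card_of_isEmpty
    have hD0Q : (Nat.card M.Dart : ℚ) = 0 := by rw [hD0]; norm_num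
    rw [hD0Q] at hcard
    rcases Nat.lt_or_ge n 2 with h2 | h2
    · have hn1 : n = 1 := by omega
      have hSpos : 1 ≤ S.card := by
        by_contra h0
        have hS0 : S.card = 0 := by omega
        rw [hS0, hn1] at hcard
        norm_num at hcard
      have hS1 : (1 : ℚ) ≤ (S.card : ℚ) := by exact_mod_cast hSpos
      rw [hn1]
      norm_num
      linarith
    · have h2Q : (2 : ℚ) ≤ (n : ℚ) := by exact_mod_cast h2
      have hfin : (n : ℚ) / 4 + 3 / 10 ≤ (S.card : ℚ) := by linarith
      linarith
end
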